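/- For every partition λ ⊢ n−1, the map ψ : SYT(λ^□) → SYT(λ^□) given by ψ(P) := jdt(1 + jdt^{−1}(P)) is a well-defined bijection whose n-th iterate is the identity (so ψ generates a ℤ_n-action on SYT(λ^□)), and it rotates cyclic descent sets: cDes(ψ(P)) = 1 + cDes(P) (addition modulo n, elementwise) for every P ∈ SYT(λ^□). -/

import Mathlib

open scoped Classical

noncomputable section

namespace SchurRot

/-! ### Permutations -/

/-- The value of the permutation `π ∈ S_n` (in one-line notation, with positions and
values `1,…,n`) at position `i ∈ [1,n]`. -/
def permVal {n : ℕ} (π : Equiv.Perm (Fin n)) (i : ℕ) : ℕ :=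
  if h : i - 1 < n then ((π ⟨i - 1, h⟩ : Fin n) : ℕ) + 1 else 0

/-- The descent set `Des(π) = {i ∈ [n-1] : π(i) > π(i+1)}`. -/
def DesPerm {n : ℕ} (π : Equiv.Perm (Fin n)) : Finset ℕ :=
  (Finset.Icc 1 (n - 1)).filter fun i => permVal π (i + 1) < permVal π i

/-- The cyclic descent set of `π ∈ S_n`: `Des(π)`, with `n` added iff `π(n) > π(1)`. -/
def cDesPerm {n : ℕ} (π : Equiv.Perm (Fin n)) : Finset ℕ :=
  if permVal π 1 < permVal π n then insert n (DesPerm π) else DesPerm π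

/-- `π ∈ S_n` fixes the letter `n` (so it can be viewed as an element of `S_{n-1}`). -/
def FixesTop {n : ℕ} (π : Equiv.Perm (Fin n)) : Prop :=
  ∀ i : Fin n, (i : ℕ) = n - 1 → π i = i

/-! ### Quasisymmetric and symmetric functions, in variables `x_1, x_2, …`
indexed by positive natural numbers (the variable `x_0` is unused). -/

/-- The fundamental quasisymmetric function `F_{n,D}`, as a formal power series in the
variables `x_i, i ∈ ℕ` (only variables with positive index are used): the coefficient of
a monomial `m` is the number of weakly increasing sequences `1 ≤ i_1 ≤ … ≤ i_n`, strictly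
increasing at positions in `D`, with content monomial `m`. -/
def Fqs (n : ℕ) (D : Finset ℕ) : MvPowerSeries ℕ ℤ :=
  fun m => (Set.ncard {g : Fin n → ℕ |
    (∀ p, 1 ≤ g p) ∧ Monotone g ∧
    (∀ j ∈ D, ∀ (h1 : j - 1 < n) (h2 : j < n), g ⟨j - 1, h1⟩ < g ⟨j, h2⟩) ∧
    (∑ p, Finsupp.single (g p) (1 : ℕ)) = m} : ℤ)

/-- `Q(B) = Σ_{π ∈ B} F_{m, Des(π)}` for a finite set `B` of permutations. -/
def Qset (m : ℕ) {n : ℕ} (B : Finset (Equiv.Perm (Fin n))) : MvPowerSeries ℕ ℤ :=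
  ∑ π ∈ B, Fqs m (DesPerm π)

/-- `Q(B)` for a multiset `B` of permutations, counted with multiplicity. -/
def Qmult (m : ℕ) {n : ℕ} (B : Multiset (Equiv.Perm (Fin n))) : MvPowerSeries ℕ ℤ :=
  (B.map fun π => Fqs m (DesPerm π)).sum

/-- The set `A·C_n = {π c^k : π ∈ A, 0 ≤ k < n}`, where `c = finRotate n` is the
`n`-cycle `(1,2,…,n)`. -/
def ACn {n : ℕ} (A : Finset (Equiv.Perm (Fin n))) : Finset (Equiv.Perm (Fin n)) :=
  (A ×ˢ Finset.range n).image fun p => p.1 * (finRotate n) ^ p.2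

/-- The multiset `A·C_n`, counted with multiplicities. -/
def ACmult {n : ℕ} (A : Multiset (Equiv.Perm (Fin n))) : Multiset (Equiv.Perm (Fin n)) :=
  A.bind fun π => (Multiset.range n).map fun k => π * (finRotate n) ^ k

/-- A formal power series in the variables `x_i, i ∈ ℕ` is a symmetric function if its
coefficients are invariant under every permutation of the variables. -/
def IsSymmFn (f : MvPowerSeries ℕ ℤ) : Prop :=
  ∀ (σ : Equiv.Perm ℕ) (m : ℕ →₀ ℕ),
    MvPowerSeries.coeff (R := ℤ) (Finsupp.equivMapDomain σ m) f = MvPowerSeries.coeff (R := ℤ) m f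

/-! ### Tableaux: fillings of an arbitrary finite cell set (in English notation,
cell `(i,j)` is in row `i` (increasing downwards) and column `j`). -/

/-- A semistandard filling of `cells` (entries ≥ 1, weakly increasing along rows,
strictly increasing down columns, `0` outside `cells`). -/
def IsSSYT (cells : Finset (ℕ × ℕ)) (g : ℕ × ℕ → ℕ) : Prop :=
  (∀ c, c ∉ cells → g c = 0) ∧ (∀ c ∈ cells, 1 ≤ g c) ∧
  (∀ a ∈ cells, ∀ b ∈ cells, a.1 = b.1 → a.2 ≤ b.2 → g a ≤ g b) ∧
  (∀ a ∈ cells, ∀ b ∈ cells, a.2 = b.2 → a.1 < b.1 → g a < g b)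

/-- The content monomial of a filling. -/
def contentOf (cells : Finset (ℕ × ℕ)) (g : ℕ × ℕ → ℕ) : ℕ →₀ ℕ :=
  ∑ c ∈ cells, Finsupp.single (g c) 1

/-- The (skew) Schur function of an arbitrary finite cell set: the sum, over all
semistandard fillings, of their content monomials. -/
def schurOf (cells : Finset (ℕ × ℕ)) : MvPowerSeries ℕ ℤ :=
  fun m => (Set.ncard {g : ℕ × ℕ → ℕ | IsSSYT cells g ∧ contentOf cells g = m} : ℤ)

/-- `f` is Schur-positive of degree `m`: a nonnegative integer combination of Schur
functions of partitions of `m` (encoded by a multiset of Young diagrams). -/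
def SchurPositive (m : ℕ) (f : MvPowerSeries ℕ ℤ) : Prop :=
  ∃ M : Multiset YoungDiagram, (∀ μ ∈ M, μ.cells.card = m) ∧
    f = (M.map fun μ => schurOf μ.cells).sum

/-! ### Standard fillings, rotation, reading words -/

/-- A filling of `cells` by the letters `1,…,n`, each used exactly once (and `0`
outside `cells`). -/
def IsFillingF (n : ℕ) (cells : Finset (ℕ × ℕ)) (f : ℕ × ℕ → ℕ) : Prop :=
  Set.BijOn f ↑cells (Set.Icc 1 n) ∧ ∀ c, c ∉ cells → f c = 0

/-- A filling is standard if its rows and columns increase. -/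
def IsStandardF (cells : Finset (ℕ × ℕ)) (f : ℕ × ℕ → ℕ) : Prop :=
  (∀ a ∈ cells, ∀ b ∈ cells, a.1 = b.1 → a.2 < b.2 → f a < f b) ∧
  (∀ a ∈ cells, ∀ b ∈ cells, a.2 = b.2 → a.1 < b.1 → f a < f b)

/-- Addition of `k` modulo `n` on the letters `1,…,n` (with `0` identified with `n`). -/
def rotval (n k e : ℕ) : ℕ := (e + k - 1) % n + 1

/-- Addition of an integer `k` modulo `n` on the letters `1,…,n`. -/
def rotvalZ (n : ℕ) (k : ℤ) (e : ℕ) : ℕ := (((e : ℤ) + k - 1) % (n : ℤ)).toNat + 1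

/-- Apply `φ` to every entry of a filling (keeping `0` outside `cells`);
e.g. `mapEntries cells (rotval n k) T` is the rotated tableau `k + T`. -/
def mapEntries (cells : Finset (ℕ × ℕ)) (φ : ℕ → ℕ) (f : ℕ × ℕ → ℕ) : ℕ × ℕ → ℕ :=
  fun c => if c ∈ cells then φ (f c) else 0

/-- The row containing the entry `e`. -/
def rowOf (cells : Finset (ℕ × ℕ)) (f : ℕ × ℕ → ℕ) (e : ℕ) : ℕ :=
  sInf {i | ∃ j, (i, j) ∈ cells ∧ f (i, j) = e}

/-- The cell containing the entry `e`. -/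
def cellOf (cells : Finset (ℕ × ℕ)) (f : ℕ × ℕ → ℕ) (e : ℕ) : ℕ × ℕ :=
  (rowOf cells f e,
    sInf {j | (rowOf cells f e, j) ∈ cells ∧ f (rowOf cells f e, j) = e})

/-- The cyclic descent set of a (rotated) filling of size `n`:
`{i ∈ [n] : i+1 (mod n) lies in a strictly lower row than i}`. -/
def cDesRot (n : ℕ) (cells : Finset (ℕ × ℕ)) (f : ℕ × ℕ → ℕ) : Finset ℕ :=
  (Finset.Icc 1 n).filter fun i => rowOf cells f i < rowOf cells f (rotval n 1 i)

/-- The descent set of a filling of size `n`: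
`{i ∈ [n-1] : i+1 lies in a strictly lower row than i}`. -/
def DesTab (n : ℕ) (cells : Finset (ℕ × ℕ)) (f : ℕ × ℕ → ℕ) : Finset ℕ :=
  (Finset.Icc 1 (n - 1)).filter fun i => rowOf cells f i < rowOf cells f (i + 1)

/-- `a` comes before `b` in reading order (rows left to right, bottom row first). -/
def readBefore (a b : ℕ × ℕ) : Prop :=
  b.1 < a.1 ∨ (a.1 = b.1 ∧ a.2 < b.2)

/-- The (1-indexed) position of the cell `c` in the reading order of `cells`. -/
def posInRead (cells : Finset (ℕ × ℕ)) (c : ℕ × ℕ) : ℕ :=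
  (cells.filter fun c' => readBefore c' c).card + 1

/-- The value at `e` of the inverse of the reading word of the filling `f`, i.e. the
position of the entry `e` in the reading word. -/
def invReadVal (cells : Finset (ℕ × ℕ)) (f : ℕ × ℕ → ℕ) (e : ℕ) : ℕ :=
  posInRead cells (cellOf cells f e)

/-- `A_λ` (for `cells` the diagram of `λ ⊢ m`): the set of permutations in `S_m` that are
inverse reading words of standard Young tableaux of shape `λ`. -/
def invWordSet (m : ℕ) (cells : Finset (ℕ × ℕ)) : Finset (Equiv.Perm (Fin m)) :=
  Finset.univ.filter fun π => ∃ f : ℕ × ℕ → ℕ,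
    IsFillingF m cells f ∧ IsStandardF cells f ∧
    ∀ e ∈ Finset.Icc 1 m, permVal π e = invReadVal cells f e

/-! ### The jeu-de-taquin type straightening algorithms -/

/-- The entry `i` is short: some entry immediately above it or immediately to its left
is larger. -/
def IsShort (cells : Finset (ℕ × ℕ)) (f : ℕ × ℕ → ℕ) (i : ℕ) : Prop :=
  ∃ c ∈ cells, f c = i ∧
    ((1 ≤ c.1 ∧ (c.1 - 1, c.2) ∈ cells ∧ i < f (c.1 - 1, c.2)) ∨
     (1 ≤ c.2 ∧ (c.1, c.2 - 1) ∈ cells ∧ i < f (c.1, c.2 - 1)))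

/-- The entry `i` is tall: some entry immediately below it or immediately to its right
is smaller. -/
def IsTall (cells : Finset (ℕ × ℕ)) (f : ℕ × ℕ → ℕ) (i : ℕ) : Prop :=
  ∃ c ∈ cells, f c = i ∧
    (((c.1 + 1, c.2) ∈ cells ∧ f (c.1 + 1, c.2) < i) ∨
     ((c.1, c.2 + 1) ∈ cells ∧ f (c.1, c.2 + 1) < i))

def shorts (n : ℕ) (cells : Finset (ℕ × ℕ)) (f : ℕ × ℕ → ℕ) : Finset ℕ :=
  (Finset.Icc 1 n).filter fun i => IsShort cells f i

def talls (n : ℕ) (cells : Finset (ℕ × ℕ)) (f : ℕ × ℕ → ℕ) : Finset ℕ :=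
  (Finset.Icc 1 n).filter fun i => IsTall cells f i

/-- One elementary step of `jdt`: take the minimal short entry `i` and switch it with
the larger of the entries immediately above it and immediately to its left. -/
def stepFun (n : ℕ) (cells : Finset (ℕ × ℕ)) (f : ℕ × ℕ → ℕ) : ℕ × ℕ → ℕ :=
  if h : (shorts n cells f).Nonempty then
    let i := (shorts n cells f).min' h
    let c := cellOf cells f i
    let av := if 1 ≤ c.1 ∧ (c.1 - 1, c.2) ∈ cells then f (c.1 - 1, c.2) else 0
    let lv := if 1 ≤ c.2 ∧ (c.1, c.2 - 1) ∈ cells then f (c.1, c.2 - 1) else 0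
    mapEntries cells (Equiv.swap i (max av lv)) f
  else f

/-- One elementary step of `ijdt`: take the maximal tall entry `i` and switch it with
the smaller of the entries immediately below it and immediately to its right. -/
def istepFun (n : ℕ) (cells : Finset (ℕ × ℕ)) (f : ℕ × ℕ → ℕ) : ℕ × ℕ → ℕ :=
  if h : (talls n cells f).Nonempty then
    let i := (talls n cells f).max' h
    let c := cellOf cells f i
    let bv := if (c.1 + 1, c.2) ∈ cells then f (c.1 + 1, c.2) else n + 1
    let rv := if (c.1, c.2 + 1) ∈ cells then f (c.1, c.2 + 1) else n + 1
    mapEntries cells (Equiv.swap i (min bv rv)) f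
  else f

/-- The straightening `jdt`: repeat the elementary step until the filling is standard. -/
def jdtFun (n : ℕ) (cells : Finset (ℕ × ℕ)) (f : ℕ × ℕ → ℕ) : ℕ × ℕ → ℕ :=
  if h : ∃ m, IsStandardF cells ((stepFun n cells)^[m] f) then
    (stepFun n cells)^[Nat.find h] f
  else f

/-- The straightening `ijdt`: repeat the reverse elementary step until the filling is
standard. -/
def ijdtFun (n : ℕ) (cells : Finset (ℕ × ℕ)) (f : ℕ × ℕ → ℕ) : ℕ × ℕ → ℕ :=
  if h : ∃ m, IsStandardF cells ((istepFun n cells)^[m] f) then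
    (istepFun n cells)^[Nat.find h] f
  else f

/-! ### The shape `λ^□` -/

/-- The cell of the disconnected box of `λ^□`, strictly north and strictly east of `λ`. -/
def boxCell (lam : YoungDiagram) : ℕ × ℕ := (0, lam.rowLen 0)

/-- The skew shape `λ^□`: `λ` (shifted one row down) together with one disconnected box
at its upper right corner. -/
def boxShape (lam : YoungDiagram) : Finset (ℕ × ℕ) :=
  insert (boxCell lam) (lam.cells.image fun c => (c.1 + 1, c.2))

/-- `δ(P)`: the entry of the disconnected box of a filling of `λ^□`. -/
def deltaOf (lam : YoungDiagram) (f : ℕ × ℕ → ℕ) : ℕ := f (boxCell lam)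

/-- The inverse of `jdt` on `SYT(λ^□)`: `jdt⁻¹(P) = δ(P) + ijdt(-δ(P) + P)`. -/
def jdtInvFun (n : ℕ) (lam : YoungDiagram) (P : ℕ × ℕ → ℕ) : ℕ × ℕ → ℕ :=
  mapEntries (boxShape lam) (rotval n (deltaOf lam P))
    (ijdtFun n (boxShape lam)
      (mapEntries (boxShape lam) (rotval n (n - deltaOf lam P)) P))

/-- The cyclic descent set of `P ∈ SYT(λ^□)`: `cDes(P) = cDes_rot(jdt⁻¹(P))`. -/
def cDesBox (n : ℕ) (lam : YoungDiagram) (P : ℕ × ℕ → ℕ) : Finset ℕ :=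
  cDesRot n (boxShape lam) (jdtInvFun n lam P)

/-- The restriction of `f` to the entries in `S` is standard: there are no two entries
in `S` in which the smaller one lies weakly south and weakly east of the larger one. -/
def RestrictedStd (cells : Finset (ℕ × ℕ)) (f : ℕ × ℕ → ℕ) (S : Finset ℕ) : Prop :=
  ∀ a ∈ cells, ∀ b ∈ cells, f a ∈ S → f b ∈ S →
    a.1 ≤ b.1 → a.2 ≤ b.2 → a ≠ b → f a < f b

end SchurRot


noncomputable section
namespace SchurRot


section Aux

open Finset

/-- Adjacency: `b` is immediately below or to the right of `a`. -/
def Adjc (a b : ℕ × ℕ) : Prop := b = (a.1 + 1, a.2) ∨ b = (a.1, a.2 + 1)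

lemma Adjc.wt {a b : ℕ × ℕ} (h : Adjc a b) : b.1 + b.2 = a.1 + a.2 + 1 := by
  rcases h with h | h <;> subst h <;> simp <;> omega

lemma Adjc.le1 {a b : ℕ × ℕ} (h : Adjc a b) : a.1 ≤ b.1 := by
  rcases h with h | h <;> subst h <;> simp

lemma Adjc.le2 {a b : ℕ × ℕ} (h : Adjc a b) : a.2 ≤ b.2 := by
  rcases h with h | h <;> subst h <;> simp

lemma Adjc.ne {a b : ℕ × ℕ} (h : Adjc a b) : a ≠ b := by
  intro hc
  have h1 := congrArg Prod.fst hc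
  have h2 := congrArg Prod.snd hc
  rcases h with h | h <;> rw [h] at h1 h2 <;> simp at h1 h2

/-- Structural properties of the cell sets we work with. -/
structure GridS (cells : Finset (ℕ × ℕ)) : Prop where
  rowcx : ∀ a ∈ cells, ∀ b ∈ cells, a.1 = b.1 → ∀ j, a.2 ≤ j → j ≤ b.2 → (a.1, j) ∈ cells
  colcx : ∀ a ∈ cells, ∀ b ∈ cells, a.2 = b.2 → ∀ i, a.1 ≤ i → i ≤ b.1 → (i, a.2) ∈ cells
  corner : ∀ a ∈ cells, ∀ b ∈ cells, a.1 ≤ b.1 → a.2 ≤ b.2 → (b.1, a.2) ∈ cells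

variable {n k : ℕ} {cells : Finset (ℕ × ℕ)} {f g T P : ℕ × ℕ → ℕ}

lemma IsFillingF.lb (hf : IsFillingF n cells f) {c : ℕ × ℕ} (hc : c ∈ cells) : 1 ≤ f c :=
  (hf.1.mapsTo hc).1

lemma IsFillingF.ub (hf : IsFillingF n cells f) {c : ℕ × ℕ} (hc : c ∈ cells) : f c ≤ n :=
  (hf.1.mapsTo hc).2

lemma IsFillingF.inj (hf : IsFillingF n cells f) {c c' : ℕ × ℕ} (hc : c ∈ cells)
    (hc' : c' ∈ cells) (h : f c = f c') : c = c' :=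
  hf.1.injOn hc hc' h

lemma IsFillingF.exists_cell (hf : IsFillingF n cells f) {e : ℕ} (h1 : 1 ≤ e) (h2 : e ≤ n) :
    ∃ c ∈ cells, f c = e := by
  have := hf.1.surjOn (Set.mem_Icc.2 ⟨h1, h2⟩)
  obtain ⟨c, hc, hfc⟩ := this
  exact ⟨c, hc, hfc⟩

lemma IsFillingF.zero (hf : IsFillingF n cells f) {c : ℕ × ℕ} (hc : c ∉ cells) : f c = 0 :=
  hf.2 c hc

lemma cellOf_eq (hf : IsFillingF n cells f) {c : ℕ × ℕ} (hc : c ∈ cells) :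
    cellOf cells f (f c) = c := by
  have hrow : {i | ∃ j, (i, j) ∈ cells ∧ f (i, j) = f c} = {c.1} := by
    ext i
    constructor
    · rintro ⟨j, hj, hfj⟩
      have : (i, j) = c := hf.inj hj hc hfj
      simp [← this]
    · rintro rfl
      exact ⟨c.2, by simpa using hc, by simp⟩
  have h1 : rowOf cells f (f c) = c.1 := by
    rw [rowOf, hrow]; simp
  have hcol : {j | (rowOf cells f (f c), j) ∈ cells ∧ f (rowOf cells f (f c), j) = f c}
      = {c.2} := by
    rw [h1]
    ext j
    constructor
    · rintro ⟨hj, hfj⟩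
      have : ((c.1, j) : ℕ × ℕ) = c := hf.inj hj hc hfj
      simpa using congrArg Prod.snd this
    · rintro rfl
      exact ⟨by simpa using hc, by simp⟩
  rw [cellOf, hcol, h1]
  simp

lemma rowOf_eq (hf : IsFillingF n cells f) {c : ℕ × ℕ} (hc : c ∈ cells) :
    rowOf cells f (f c) = c.1 := by
  have := cellOf_eq hf hc
  exact congrArg Prod.fst this

/-! mapEntries basics -/

lemma mapEntries_mem {φ : ℕ → ℕ} {c : ℕ × ℕ} (hc : c ∈ cells) :
    mapEntries cells φ f c = φ (f c) := if_pos hc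

lemma mapEntries_not_mem {φ : ℕ → ℕ} {c : ℕ × ℕ} (hc : c ∉ cells) :
    mapEntries cells φ f c = 0 := if_neg hc

lemma mapEntries_comp {φ ψ : ℕ → ℕ} :
    mapEntries cells φ (mapEntries cells ψ f) = mapEntries cells (fun x => φ (ψ x)) f := by
  funext c
  by_cases hc : c ∈ cells
  · simp [mapEntries, hc]
  · simp [mapEntries, hc]

lemma mapEntries_eq_self {φ : ℕ → ℕ} (h0 : ∀ c, c ∉ cells → f c = 0)
    (h : ∀ c ∈ cells, φ (f c) = f c) : mapEntries cells φ f = f := by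
  funext c
  by_cases hc : c ∈ cells
  · simp [mapEntries, hc, h c hc]
  · simp [mapEntries, hc, (h0 c hc).symm]

lemma IsFillingF.mapEntries_bij {φ : ℕ → ℕ} (hf : IsFillingF n cells f)
    (hφ : Set.BijOn φ (Set.Icc 1 n) (Set.Icc 1 n)) :
    IsFillingF n cells (mapEntries cells φ f) := by
  constructor
  · have h1 : Set.BijOn (φ ∘ f) ↑cells (Set.Icc 1 n) := hφ.comp hf.1
    apply h1.congr
    intro c hc
    simp only [Set.mem_setOf_eq, Finset.mem_coe] at hc
    exact (if_pos hc).symm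
  · intro c hc
    simp [mapEntries, hc]

/-! rotval arithmetic -/

lemma rotval_mem (hn : 1 ≤ n) {e a : ℕ} (h1 : 1 ≤ e) :
    1 ≤ rotval n a e ∧ rotval n a e ≤ n := by
  unfold rotval
  have := Nat.mod_lt (e + a - 1) (show 0 < n by omega)
  omega

lemma rotval_add {a b e : ℕ} (h1 : 1 ≤ e) :
    rotval n a (rotval n b e) = rotval n (b + a) e := by
  unfold rotval
  have h2 : (e + b - 1) % n + 1 + a - 1 = (e + b - 1) % n + a := by omega
  rw [h2, Nat.mod_add_mod]
  congr 2
  omega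

lemma rotval_n_eq (hn : 1 ≤ n) {e : ℕ} (h1 : 1 ≤ e) (h2 : e ≤ n) : rotval n n e = e := by
  unfold rotval
  have h3 : e + n - 1 = (e - 1) + n := by omega
  rw [h3, Nat.add_mod_right, Nat.mod_eq_of_lt (by omega)]
  omega

lemma rotval_cancel (hn : 1 ≤ n) (hkn : k ≤ n) {e : ℕ} (h1 : 1 ≤ e) (h2 : e ≤ n) :
    rotval n k (rotval n (n - k) e) = e := by
  rw [rotval_add h1, show n - k + k = n by omega, rotval_n_eq hn h1 h2]

lemma rotval_cancel' (hn : 1 ≤ n) (hkn : k ≤ n) {e : ℕ} (h1 : 1 ≤ e) (h2 : e ≤ n) :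
    rotval n (n - k) (rotval n k e) = e := by
  rw [rotval_add h1, show k + (n - k) = n by omega, rotval_n_eq hn h1 h2]

lemma rotval_small (hkn : k ≤ n) {e : ℕ} (h1 : 1 ≤ e) (h2 : e ≤ k) :
    rotval n (n - k) e = e + (n - k) := by
  unfold rotval
  rw [Nat.mod_eq_of_lt (by omega)]
  omega

lemma rotval_big (hkn : k ≤ n) {e : ℕ} (h1 : k < e) (h2 : e ≤ n) :
    rotval n (n - k) e = e - k := by
  unfold rotval
  have h3 : e + (n - k) - 1 = n + (e - k - 1) := by omega
  rw [h3, Nat.add_mod_left, Nat.mod_eq_of_lt (by omega)]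
  omega

lemma rotval_fwd_small (hkn : k ≤ n) {e : ℕ} (h1 : 1 ≤ e) (h2 : e ≤ n - k) :
    rotval n k e = e + k := by
  unfold rotval
  rw [Nat.mod_eq_of_lt (by omega)]
  omega

lemma rotval_fwd_big (hkn : k ≤ n) {e : ℕ} (h1 : n - k < e) (h2 : e ≤ n) :
    rotval n k e = e - (n - k) := by
  unfold rotval
  have h3 : e + k - 1 = n + (e - (n - k) - 1) := by omega
  rw [h3, Nat.add_mod_left, Nat.mod_eq_of_lt (by omega)]
  omega

lemma rotval_bijOn (hn : 1 ≤ n) (hkn : k ≤ n) :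
    Set.BijOn (rotval n k) (Set.Icc 1 n) (Set.Icc 1 n) := by
  refine ⟨fun e he => ?_, fun e he e' he' hee => ?_, fun e he => ?_⟩
  · have := rotval_mem (a := k) hn he.1
    exact Set.mem_Icc.2 this
  · simp only [Set.mem_Icc] at he he'
    have h1 := rotval_cancel' hn hkn he.1 he.2
    have h2 := rotval_cancel' hn hkn he'.1 he'.2
    rw [← h1, ← h2, hee]
  · simp only [Set.mem_Icc] at he
    refine ⟨rotval n (n - k) e, ?_, rotval_cancel hn hkn he.1 he.2⟩
    have := rotval_mem (a := n - k) hn he.1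
    exact Set.mem_Icc.2 this

/-! shorts and talls -/

lemma mem_shorts_iff (hf : IsFillingF n cells f) {i : ℕ} :
    i ∈ shorts n cells f ↔ IsShort cells f i := by
  rw [shorts, Finset.mem_filter]
  constructor
  · exact fun h => h.2
  · intro h
    refine ⟨?_, h⟩
    obtain ⟨c, hc, hfc, -⟩ := h
    rw [Finset.mem_Icc, ← hfc]
    exact ⟨hf.lb hc, hf.ub hc⟩

lemma mem_talls_iff (hf : IsFillingF n cells f) {i : ℕ} :
    i ∈ talls n cells f ↔ IsTall cells f i := by
  rw [talls, Finset.mem_filter]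
  constructor
  · exact fun h => h.2
  · intro h
    refine ⟨?_, h⟩
    obtain ⟨c, hc, hfc, -⟩ := h
    rw [Finset.mem_Icc, ← hfc]
    exact ⟨hf.lb hc, hf.ub hc⟩

lemma std_of_no_short (hg : GridS cells) (hf : IsFillingF n cells f)
    (h : ∀ i, ¬ IsShort cells f i) : IsStandardF cells f := by
  have hrow : ∀ d : ℕ, ∀ a ∈ cells, ∀ b ∈ cells, a.1 = b.1 → a.2 < b.2 → b.2 - a.2 ≤ d →
      f a < f b := by
    intro d
    induction d with
    | zero => intro a _ b _ _ h2 h3; omega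
    | succ d ih =>
      intro a ha b hb h1 h2 h3
      by_cases hd : b.2 = a.2 + 1
      · -- adjacent
        have hab : a = (b.1, b.2 - 1) := by
          ext <;> simp [h1, hd]
        have hne : f b ≠ f a := fun hc => (Adjc.ne (a := a) (b := b) (by
          right; ext <;> simp [h1, hd])) (hf.inj ha hb hc.symm)
        rcases lt_or_gt_of_ne hne with hlt | hgt
        · exfalso
          exact h (f b) ⟨b, hb, rfl, Or.inr ⟨by omega, by rw [← hab]; exact ha,
            by rw [← hab]; exact hlt⟩⟩
        · exact hgt
      · have hb' : (a.1, b.2 - 1) ∈ cells := hg.rowcx a ha b hb h1 (b.2 - 1) (by omega) (by omega)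
        have l1 : f a < f (a.1, b.2 - 1) := ih a ha _ hb' rfl (by omega) (by simp; omega)
        have l2 : f (a.1, b.2 - 1) < f b := ih _ hb' b hb (by simp [h1]) (by simp; omega)
          (by simp; omega)
        omega
  have hcol : ∀ d : ℕ, ∀ a ∈ cells, ∀ b ∈ cells, a.2 = b.2 → a.1 < b.1 → b.1 - a.1 ≤ d →
      f a < f b := by
    intro d
    induction d with
    | zero => intro a _ b _ _ h2 h3; omega
    | succ d ih =>
      intro a ha b hb h1 h2 h3
      by_cases hd : b.1 = a.1 + 1
      · have hab : a = (b.1 - 1, b.2) := by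
          ext <;> simp [h1, hd]
        have hne : f b ≠ f a := fun hc => (Adjc.ne (a := a) (b := b) (by
          left; ext <;> simp [h1, hd])) (hf.inj ha hb hc.symm)
        rcases lt_or_gt_of_ne hne with hlt | hgt
        · exfalso
          exact h (f b) ⟨b, hb, rfl, Or.inl ⟨by omega, by rw [← hab]; exact ha,
            by rw [← hab]; exact hlt⟩⟩
        · exact hgt
      · have hb' : (b.1 - 1, a.2) ∈ cells := hg.colcx a ha b hb h1 (b.1 - 1) (by omega) (by omega)
        have l1 : f a < f (b.1 - 1, a.2) := ih a ha _ hb' rfl (by omega) (by simp; omega)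
        have l2 : f (b.1 - 1, a.2) < f b := ih _ hb' b hb (by simp [h1]) (by simp; omega)
          (by simp; omega)
        omega
  exact ⟨fun a ha b hb h1 h2 => hrow (b.2 - a.2) a ha b hb h1 h2 le_rfl,
    fun a ha b hb h1 h2 => hcol (b.1 - a.1) a ha b hb h1 h2 le_rfl⟩

lemma no_short_of_std (h : IsStandardF cells f) : ∀ i, ¬ IsShort cells f i := by
  rintro i ⟨c, hc, hfc, hcase⟩
  rcases hcase with ⟨h1, hup, hlt⟩ | ⟨h1, hleft, hlt⟩
  · have := h.2 _ hup _ hc (by simp) (by simp; omega)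
    omega
  · have := h.1 _ hleft _ hc (by simp) (by simp; omega)
    omega

lemma no_tall_of_std (h : IsStandardF cells f) : ∀ i, ¬ IsTall cells f i := by
  rintro i ⟨c, hc, hfc, hcase⟩
  rcases hcase with ⟨hdn, hlt⟩ | ⟨hrt, hlt⟩
  · have := h.2 _ hc _ hdn (by simp) (by simp)
    omega
  · have := h.1 _ hc _ hrt (by simp) (by simp)
    omega

lemma std_of_no_tall (hg : GridS cells) (hf : IsFillingF n cells f)
    (h : ∀ i, ¬ IsTall cells f i) : IsStandardF cells f := by
  apply std_of_no_short hg hf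
  rintro i ⟨c, hc, hfc, hcase⟩
  rcases hcase with ⟨h1, hup, hlt⟩ | ⟨h1, hleft, hlt⟩
  · refine h (f (c.1 - 1, c.2)) ⟨(c.1 - 1, c.2), hup, rfl, Or.inl ?_⟩
    have : (c.1 - 1 + 1, c.2) = c := by ext <;> simp <;> omega
    rw [this]
    exact ⟨hc, by omega⟩
  · refine h (f (c.1, c.2 - 1)) ⟨(c.1, c.2 - 1), hleft, rfl, Or.inr ?_⟩
    have : (c.1, c.2 - 1 + 1) = c := by ext <;> simp <;> omega
    rw [this]
    exact ⟨hc, by omega⟩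

lemma shorts_nonempty_of_not_std (hg : GridS cells) (hf : IsFillingF n cells f)
    (h : ¬ IsStandardF cells f) : (shorts n cells f).Nonempty := by
  by_contra hc
  rw [Finset.not_nonempty_iff_eq_empty] at hc
  refine h (std_of_no_short hg hf fun i hi => ?_)
  have := (mem_shorts_iff hf).2 hi
  simp [hc] at this

lemma talls_nonempty_of_not_std (hg : GridS cells) (hf : IsFillingF n cells f)
    (h : ¬ IsStandardF cells f) : (talls n cells f).Nonempty := by
  by_contra hc
  rw [Finset.not_nonempty_iff_eq_empty] at hc
  refine h (std_of_no_tall hg hf fun i hi => ?_)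
  have := (mem_talls_iff hf).2 hi
  simp [hc] at this

lemma not_std_of_short (hs : IsShort cells f i) : ¬ IsStandardF cells f :=
  fun h => no_short_of_std h i hs

end Aux


section Aux2

open Finset

variable {n k : ℕ} {cells : Finset (ℕ × ℕ)} {f g T P : ℕ × ℕ → ℕ}

lemma swap_bijOn {c c' : ℕ × ℕ} (hc : c ∈ cells) (hc' : c' ∈ cells) :
    Set.BijOn (Equiv.swap c c') ↑cells ↑cells := by
  refine ⟨fun x hx => ?_, (Equiv.injective _).injOn, fun y hy => ?_⟩
  · rcases eq_or_ne x c with rfl | h1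
    · simpa [Equiv.swap_apply_left] using hc'
    rcases eq_or_ne x c' with rfl | h2
    · simpa [Equiv.swap_apply_right] using hc
    · rwa [Equiv.swap_apply_of_ne_of_ne h1 h2]
  · refine ⟨Equiv.swap c c' y, ?_, by simp⟩
    rcases eq_or_ne y c with rfl | h1
    · simpa [Equiv.swap_apply_left] using hc'
    rcases eq_or_ne y c' with rfl | h2
    · simpa [Equiv.swap_apply_right] using hc
    · rwa [Equiv.swap_apply_of_ne_of_ne h1 h2]

lemma filling_comp_swap (hf : IsFillingF n cells f) {c c' : ℕ × ℕ} (hc : c ∈ cells)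
    (hc' : c' ∈ cells) : IsFillingF n cells (f ∘ (Equiv.swap c c')) := by
  constructor
  · exact hf.1.comp (swap_bijOn hc hc')
  · intro d hd
    have h1 : d ≠ c := fun h => hd (h ▸ hc)
    have h2 : d ≠ c' := fun h => hd (h ▸ hc')
    simp only [Function.comp_apply, Equiv.swap_apply_of_ne_of_ne h1 h2]
    exact hf.zero hd

lemma mapEntries_swap_eq (hf : IsFillingF n cells f) {c c' : ℕ × ℕ} (hc : c ∈ cells)
    (hc' : c' ∈ cells) (hne : c ≠ c') :
    mapEntries cells (Equiv.swap (f c) (f c')) f = f ∘ (Equiv.swap c c') := by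
  funext d
  by_cases hd : d ∈ cells
  · rw [mapEntries_mem hd]
    rcases eq_or_ne d c with rfl | h1
    · simp [Equiv.swap_apply_left]
    rcases eq_or_ne d c' with rfl | h2
    · simp [Equiv.swap_apply_right]
    · have e1 : f d ≠ f c := fun h => h1 (hf.inj hd hc h)
      have e2 : f d ≠ f c' := fun h => h2 (hf.inj hd hc' h)
      simp [Equiv.swap_apply_of_ne_of_ne, e1, e2, h1, h2]
  · rw [mapEntries_not_mem hd]
    have h1 : d ≠ c := fun h => hd (h ▸ hc)
    have h2 : d ≠ c' := fun h => hd (h ▸ hc')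
    simp only [Function.comp_apply, Equiv.swap_apply_of_ne_of_ne h1 h2]
    exact (hf.zero hd).symm

lemma comp_swap_left {c c' : ℕ × ℕ} : (f ∘ (Equiv.swap c c')) c = f c' := by
  simp [Equiv.swap_apply_left]

lemma comp_swap_right {c c' : ℕ × ℕ} : (f ∘ (Equiv.swap c c')) c' = f c := by
  simp [Equiv.swap_apply_right]

lemma comp_swap_other {c c' d : ℕ × ℕ} (h1 : d ≠ c) (h2 : d ≠ c') :
    (f ∘ (Equiv.swap c c')) d = f d := by
  simp [Equiv.swap_apply_of_ne_of_ne h1 h2]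

lemma comp_swap_invol {c c' : ℕ × ℕ} : (f ∘ (Equiv.swap c c')) ∘ (Equiv.swap c c') = f := by
  funext d
  simp

lemma mapEntries_comp_swap {φ : ℕ → ℕ} {c c' : ℕ × ℕ} (hc : c ∈ cells) (hc' : c' ∈ cells) :
    mapEntries cells φ (f ∘ (Equiv.swap c c')) = (mapEntries cells φ f) ∘ (Equiv.swap c c') := by
  funext d
  by_cases hd : d ∈ cells
  · have hsd : (Equiv.swap c c') d ∈ cells := (swap_bijOn hc hc').mapsTo hd
    simp only [Function.comp_apply, mapEntries_mem hd, mapEntries_mem hsd]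
  · have h1 : d ≠ c := fun h => hd (h ▸ hc)
    have h2 : d ≠ c' := fun h => hd (h ▸ hc')
    simp only [Function.comp_apply, mapEntries_not_mem hd,
      Equiv.swap_apply_of_ne_of_ne h1 h2, mapEntries_not_mem hd]

/-- Specification of one `jdt` step. -/
lemma step_spec (hf : IsFillingF n cells f) (hne : (shorts n cells f).Nonempty) :
    ∃ c c', c ∈ cells ∧ c' ∈ cells ∧ Adjc c' c ∧
      f c = (shorts n cells f).min' hne ∧ f c < f c' ∧
      (∀ w ∈ cells, Adjc w c → f w ≤ f c') ∧
      stepFun n cells f = f ∘ (Equiv.swap c c') := by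
  classical
  have hi : IsShort cells f ((shorts n cells f).min' hne) :=
    (mem_shorts_iff hf).1 ((shorts n cells f).min'_mem hne)
  set i := (shorts n cells f).min' hne with hidef
  obtain ⟨cw, hcw, hfcw, hcase⟩ := hi
  have hcell : cellOf cells f i = cw := by rw [← hfcw]; exact cellOf_eq hf hcw
  set av := if 1 ≤ cw.1 ∧ (cw.1 - 1, cw.2) ∈ cells then f (cw.1 - 1, cw.2) else 0 with havdef
  set lv := if 1 ≤ cw.2 ∧ (cw.1, cw.2 - 1) ∈ cells then f (cw.1, cw.2 - 1) else 0 with hlvdef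
  have hstep : stepFun n cells f = mapEntries cells (Equiv.swap i (max av lv)) f := by
    rw [stepFun, dif_pos hne]
    simp only [← hidef, hcell, ← havdef, ← hlvdef]
  have hMi : i < max av lv := by
    rcases hcase with ⟨h1, hup, hlt⟩ | ⟨h1, hleft, hlt⟩
    · have hx : av = f (cw.1 - 1, cw.2) := by rw [havdef, if_pos ⟨h1, hup⟩]
      have h5 : i < av := by rw [hx]; exact hlt
      exact lt_of_lt_of_le h5 (le_max_left _ _)
    · have hx : lv = f (cw.1, cw.2 - 1) := by rw [hlvdef, if_pos ⟨h1, hleft⟩]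
      have h5 : i < lv := by rw [hx]; exact hlt
      exact lt_of_lt_of_le h5 (le_max_right _ _)
  have hub : ∀ w ∈ cells, Adjc w cw → f w ≤ max av lv := by
    intro w hw hadj
    rcases hadj with hadj | hadj
    · -- cw = (w.1+1, w.2), so w = (cw.1 - 1, cw.2) and 1 ≤ cw.1
      have h1 : cw.1 = w.1 + 1 := by rw [hadj]
      have h2 : cw.2 = w.2 := by rw [hadj]
      have hw' : w = (cw.1 - 1, cw.2) := by ext <;> omega
      have hx : av = f w := by rw [havdef, if_pos ⟨by omega, by rw [← hw']; exact hw⟩, ← hw']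
      rw [← hx]
      exact le_max_left _ _
    · have h1 : cw.1 = w.1 := by rw [hadj]
      have h2 : cw.2 = w.2 + 1 := by rw [hadj]
      have hw' : w = (cw.1, cw.2 - 1) := by ext <;> omega
      have hx : lv = f w := by rw [hlvdef, if_pos ⟨by omega, by rw [← hw']; exact hw⟩, ← hw']
      rw [← hx]
      exact le_max_right _ _
  -- locate the cell of the max
  have hmaxpos : 1 ≤ max av lv := by
    have := hf.lb hcw
    omega
  have hc' : ∃ c', c' ∈ cells ∧ Adjc c' cw ∧ f c' = max av lv := by
    rcases max_cases av lv with ⟨hm, hle⟩ | ⟨hm, hlt⟩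
    · -- max = av
      have hav : 1 ≤ cw.1 ∧ (cw.1 - 1, cw.2) ∈ cells := by
        by_contra hcon
        have hav0 : av = 0 := by rw [havdef, if_neg hcon]
        omega
      refine ⟨(cw.1 - 1, cw.2), hav.2, Or.inl (by ext <;> simp <;> omega), ?_⟩
      rw [hm, havdef, if_pos hav]
    · have hlv : 1 ≤ cw.2 ∧ (cw.1, cw.2 - 1) ∈ cells := by
        by_contra hcon
        have hlv0 : lv = 0 := by rw [hlvdef, if_neg hcon]
        rw [hlv0] at hlt
        exact absurd hlt (by omega)
      refine ⟨(cw.1, cw.2 - 1), hlv.2, Or.inr (by ext <;> simp <;> omega), ?_⟩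
      rw [hm, hlvdef, if_pos hlv]
  obtain ⟨c', hc'mem, hc'adj, hc'val⟩ := hc'
  refine ⟨cw, c', hcw, hc'mem, hc'adj, hfcw, by omega, by
    intro w hw hadj; rw [hc'val]; exact hub w hw hadj, ?_⟩
  rw [hstep, ← hfcw, ← hc'val]
  exact mapEntries_swap_eq hf hcw hc'mem (by
    intro hcon
    rw [hcon, hc'val] at hfcw
    omega)

/-- Specification of one `ijdt` step. -/
lemma istep_spec (hf : IsFillingF n cells f) (hne : (talls n cells f).Nonempty) :
    ∃ c c'', c ∈ cells ∧ c'' ∈ cells ∧ Adjc c c'' ∧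
      f c = (talls n cells f).max' hne ∧ f c'' < f c ∧
      (∀ w ∈ cells, Adjc c w → f c'' ≤ f w) ∧
      istepFun n cells f = f ∘ (Equiv.swap c c'') := by
  classical
  have hi : IsTall cells f ((talls n cells f).max' hne) :=
    (mem_talls_iff hf).1 ((talls n cells f).max'_mem hne)
  set i := (talls n cells f).max' hne with hidef
  obtain ⟨cw, hcw, hfcw, hcase⟩ := hi
  have hcell : cellOf cells f i = cw := by rw [← hfcw]; exact cellOf_eq hf hcw
  set bv := if (cw.1 + 1, cw.2) ∈ cells then f (cw.1 + 1, cw.2) else n + 1 with hbvdef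
  set rv := if (cw.1, cw.2 + 1) ∈ cells then f (cw.1, cw.2 + 1) else n + 1 with hrvdef
  have hstep : istepFun n cells f = mapEntries cells (Equiv.swap i (min bv rv)) f := by
    rw [istepFun, dif_pos hne]
    simp only [← hidef, hcell, ← hbvdef, ← hrvdef]
  have hMi : min bv rv < i := by
    rcases hcase with ⟨hdn, hlt⟩ | ⟨hrt, hlt⟩
    · have hx : bv = f (cw.1 + 1, cw.2) := by rw [hbvdef, if_pos hdn]
      exact lt_of_le_of_lt (le_trans (min_le_left _ _) (le_of_eq hx)) hlt
    · have hx : rv = f (cw.1, cw.2 + 1) := by rw [hrvdef, if_pos hrt]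
      exact lt_of_le_of_lt (le_trans (min_le_right _ _) (le_of_eq hx)) hlt
  have hub : ∀ w ∈ cells, Adjc cw w → min bv rv ≤ f w := by
    intro w hw hadj
    rcases hadj with hadj | hadj
    · have hx : bv = f w := by rw [hbvdef, if_pos (by rw [← hadj]; exact hw), ← hadj]
      exact le_trans (min_le_left _ _) (le_of_eq hx)
    · have hx : rv = f w := by rw [hrvdef, if_pos (by rw [← hadj]; exact hw), ← hadj]
      exact le_trans (min_le_right _ _) (le_of_eq hx)
  have hc'' : ∃ c'', c'' ∈ cells ∧ Adjc cw c'' ∧ f c'' = min bv rv := by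
    have hin : min bv rv ≤ n := by
      have := hf.ub hcw
      omega
    rcases min_cases bv rv with ⟨hm, hle⟩ | ⟨hm, hlt⟩
    · have hbvc : (cw.1 + 1, cw.2) ∈ cells := by
        by_contra hcon
        have hbv0 : bv = n + 1 := by rw [hbvdef, if_neg hcon]
        have h9 : i ≤ n := hfcw ▸ hf.ub hcw
        rw [hm, hbv0] at hMi
        omega
      refine ⟨(cw.1 + 1, cw.2), hbvc, Or.inl rfl, ?_⟩
      rw [hm, hbvdef, if_pos hbvc]
    · have hrvc : (cw.1, cw.2 + 1) ∈ cells := by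
        by_contra hcon
        have hrv0 : rv = n + 1 := by rw [hrvdef, if_neg hcon]
        have h9 : i ≤ n := hfcw ▸ hf.ub hcw
        rw [hm, hrv0] at hMi
        omega
      refine ⟨(cw.1, cw.2 + 1), hrvc, Or.inr rfl, ?_⟩
      rw [hm, hrvdef, if_pos hrvc]
  obtain ⟨c'', hc''mem, hc''adj, hc''val⟩ := hc''
  refine ⟨cw, c'', hcw, hc''mem, hc''adj, hfcw, by omega, by
    intro w hw hadj; rw [hc''val]; exact hub w hw hadj, ?_⟩
  rw [hstep, ← hfcw, ← hc''val]
  exact mapEntries_swap_eq hf hcw hc''mem (by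
    intro hcon
    rw [hcon, hc''val] at hfcw
    omega)

lemma step_eq_of_empty (h : ¬ (shorts n cells f).Nonempty) : stepFun n cells f = f := by
  rw [stepFun, dif_neg h]

lemma istep_eq_of_empty (h : ¬ (talls n cells f).Nonempty) : istepFun n cells f = f := by
  rw [istepFun, dif_neg h]

lemma step_filling (hf : IsFillingF n cells f) : IsFillingF n cells (stepFun n cells f) := by
  by_cases hne : (shorts n cells f).Nonempty
  · obtain ⟨c, c', hc, hc', _, _, _, _, heq⟩ := step_spec hf hne
    rw [heq]
    exact filling_comp_swap hf hc hc'
  · rw [step_eq_of_empty hne]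
    exact hf

lemma istep_filling (hf : IsFillingF n cells f) : IsFillingF n cells (istepFun n cells f) := by
  by_cases hne : (talls n cells f).Nonempty
  · obtain ⟨c, c', hc, hc', _, _, _, _, heq⟩ := istep_spec hf hne
    rw [heq]
    exact filling_comp_swap hf hc hc'
  · rw [istep_eq_of_empty hne]
    exact hf

/-! Termination via a potential function -/

def potF (cells : Finset (ℕ × ℕ)) (f : ℕ × ℕ → ℕ) : ℕ :=
  ∑ c ∈ cells, f c * (c.1 + c.2)

lemma pot_swap_lt {c c' : ℕ × ℕ} (hc : c ∈ cells) (hc' : c' ∈ cells)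
    (hwt : c.1 + c.2 = c'.1 + c'.2 + 1) (hlt : f c < f c') :
    potF cells f < potF cells (f ∘ (Equiv.swap c c')) := by
  classical
  have hne : c ≠ c' := by
    intro h
    rw [h] at hwt
    omega
  have hsplit : ∀ h : ℕ × ℕ → ℕ, ∑ d ∈ cells, h d
      = h c + (h c' + ∑ d ∈ (cells.erase c).erase c', h d) := by
    intro h
    rw [Finset.add_sum_erase _ _ (Finset.mem_erase.2 ⟨Ne.symm hne, hc'⟩),
      Finset.add_sum_erase _ _ hc]
  have hrest : ∑ d ∈ (cells.erase c).erase c', (f ∘ (Equiv.swap c c')) d * (d.1 + d.2)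
      = ∑ d ∈ (cells.erase c).erase c', f d * (d.1 + d.2) := by
    apply Finset.sum_congr rfl
    intro d hd
    have h1 : d ≠ c := (Finset.mem_erase.1 (Finset.mem_erase.1 hd).2).1
    have h2 : d ≠ c' := (Finset.mem_erase.1 hd).1
    rw [comp_swap_other h1 h2]
  rw [potF, potF, hsplit (fun d => f d * (d.1 + d.2)),
    hsplit (fun d => (f ∘ (Equiv.swap c c')) d * (d.1 + d.2)), hrest]
  simp only [comp_swap_left, comp_swap_right]
  have e1 : f c' * (c.1 + c.2) = f c' * (c'.1 + c'.2) + f c' := by rw [hwt]; ring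
  have e2 : f c * (c.1 + c.2) = f c * (c'.1 + c'.2) + f c := by rw [hwt]; ring
  have e3 : f c * (c'.1 + c'.2) ≤ f c' * (c'.1 + c'.2) :=
    Nat.mul_le_mul_right _ (by omega)
  omega

lemma pot_le (hf : IsFillingF n cells f) : potF cells f ≤ n * ∑ c ∈ cells, (c.1 + c.2) := by
  rw [potF, Finset.mul_sum]
  apply Finset.sum_le_sum
  intro c hc
  exact Nat.mul_le_mul_right _ (hf.ub hc)

lemma exists_std_iterate (hg : GridS cells) (hf : IsFillingF n cells f) :
    ∃ m, IsStandardF cells ((stepFun n cells)^[m] f) := by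
  classical
  set B := n * ∑ c ∈ cells, (c.1 + c.2) with hB
  have main : ∀ d : ℕ, ∀ h : ℕ × ℕ → ℕ, IsFillingF n cells h → B - potF cells h ≤ d →
      ∃ m, IsStandardF cells ((stepFun n cells)^[m] h) := by
    intro d
    induction d with
    | zero =>
      intro h hh hd
      by_cases hstd : IsStandardF cells h
      · exact ⟨0, hstd⟩
      · exfalso
        have hne := shorts_nonempty_of_not_std hg hh hstd
        obtain ⟨c, c', hc, hc', hadj, _, hlt, _, heq⟩ := step_spec hh hne
        have h1 : potF cells h < potF cells (h ∘ (Equiv.swap c c')) :=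
          pot_swap_lt hc hc' (by have := hadj.wt; omega) hlt
        have h2 : potF cells (h ∘ (Equiv.swap c c')) ≤ B := by
          rw [← heq]
          exact pot_le (step_filling hh)
        omega
    | succ d ih =>
      intro h hh hd
      by_cases hstd : IsStandardF cells h
      · exact ⟨0, hstd⟩
      · have hne := shorts_nonempty_of_not_std hg hh hstd
        obtain ⟨c, c', hc, hc', hadj, _, hlt, _, heq⟩ := step_spec hh hne
        have h1 : potF cells h < potF cells (stepFun n cells h) := by
          rw [heq]
          exact pot_swap_lt hc hc' (by have := hadj.wt; omega) hlt
        have h2 : potF cells (stepFun n cells h) ≤ B := pot_le (step_filling hh)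
        obtain ⟨m, hm⟩ := ih (stepFun n cells h) (step_filling hh) (by omega)
        exact ⟨m + 1, by rwa [Function.iterate_succ_apply]⟩
  exact main B f hf (by omega)

lemma exists_std_iiterate (hg : GridS cells) (hf : IsFillingF n cells f) :
    ∃ m, IsStandardF cells ((istepFun n cells)^[m] f) := by
  classical
  set B := n * ∑ c ∈ cells, (c.1 + c.2) with hB
  have main : ∀ d : ℕ, ∀ h : ℕ × ℕ → ℕ, IsFillingF n cells h → B - potF cells h ≤ d →
      ∃ m, IsStandardF cells ((istepFun n cells)^[m] h) := by
    intro d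
    induction d with
    | zero =>
      intro h hh hd
      by_cases hstd : IsStandardF cells h
      · exact ⟨0, hstd⟩
      · exfalso
        have hne := talls_nonempty_of_not_std hg hh hstd
        obtain ⟨c, c'', hc, hc'', hadj, _, hlt, _, heq⟩ := istep_spec hh hne
        have h1 : potF cells h < potF cells (h ∘ (Equiv.swap c c'')) := by
          rw [Equiv.swap_comm]
          exact pot_swap_lt hc'' hc (by have := hadj.wt; omega) hlt
        have h2 : potF cells (h ∘ (Equiv.swap c c'')) ≤ B := by
          rw [← heq]
          exact pot_le (istep_filling hh)
        omega
    | succ d ih =>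
      intro h hh hd
      by_cases hstd : IsStandardF cells h
      · exact ⟨0, hstd⟩
      · have hne := talls_nonempty_of_not_std hg hh hstd
        obtain ⟨c, c'', hc, hc'', hadj, _, hlt, _, heq⟩ := istep_spec hh hne
        have h1 : potF cells h < potF cells (istepFun n cells h) := by
          rw [heq, Equiv.swap_comm]
          exact pot_swap_lt hc'' hc (by have := hadj.wt; omega) hlt
        have h2 : potF cells (istepFun n cells h) ≤ B := pot_le (istep_filling hh)
        obtain ⟨m, hm⟩ := ih (istepFun n cells h) (istep_filling hh) (by omega)
        exact ⟨m + 1, by rwa [Function.iterate_succ_apply]⟩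
  exact main B f hf (by omega)

lemma jdtFun_spec (hg : GridS cells) (hf : IsFillingF n cells f) {N : ℕ}
    (hN : IsStandardF cells ((stepFun n cells)^[N] f))
    (hmin : ∀ j < N, ¬ IsStandardF cells ((stepFun n cells)^[j] f)) :
    jdtFun n cells f = (stepFun n cells)^[N] f := by
  classical
  have hex : ∃ m, IsStandardF cells ((stepFun n cells)^[m] f) := ⟨N, hN⟩
  rw [jdtFun, dif_pos hex]
  have h1 : Nat.find hex = N := by
    rcases lt_trichotomy (Nat.find hex) N with h | h | h
    · exact absurd (Nat.find_spec hex) (hmin _ h)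
    · exact h
    · exact absurd hN (Nat.find_min hex h)
  rw [h1]

lemma ijdtFun_spec (hg : GridS cells) (hf : IsFillingF n cells f) {N : ℕ}
    (hN : IsStandardF cells ((istepFun n cells)^[N] f))
    (hmin : ∀ j < N, ¬ IsStandardF cells ((istepFun n cells)^[j] f)) :
    ijdtFun n cells f = (istepFun n cells)^[N] f := by
  classical
  have hex : ∃ m, IsStandardF cells ((istepFun n cells)^[m] f) := ⟨N, hN⟩
  rw [ijdtFun, dif_pos hex]
  have h1 : Nat.find hex = N := by
    rcases lt_trichotomy (Nat.find hex) N with h | h | h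
    · exact absurd (Nat.find_spec hex) (hmin _ h)
    · exact h
    · exact absurd hN (Nat.find_min hex h)
  rw [h1]

lemma jdtFun_run (hg : GridS cells) (hf : IsFillingF n cells f) :
    ∃ N, jdtFun n cells f = (stepFun n cells)^[N] f ∧
      IsStandardF cells ((stepFun n cells)^[N] f) ∧
      ∀ j < N, ¬ IsStandardF cells ((stepFun n cells)^[j] f) := by
  classical
  have hex := exists_std_iterate hg hf
  exact ⟨Nat.find hex, jdtFun_spec hg hf (Nat.find_spec hex) (fun j hj => Nat.find_min hex hj),
    Nat.find_spec hex, fun j hj => Nat.find_min hex hj⟩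

lemma ijdtFun_run (hg : GridS cells) (hf : IsFillingF n cells f) :
    ∃ N, ijdtFun n cells f = (istepFun n cells)^[N] f ∧
      IsStandardF cells ((istepFun n cells)^[N] f) ∧
      ∀ j < N, ¬ IsStandardF cells ((istepFun n cells)^[j] f) := by
  classical
  have hex := exists_std_iiterate hg hf
  exact ⟨Nat.find hex, ijdtFun_spec hg hf (Nat.find_spec hex) (fun j hj => Nat.find_min hex hj),
    Nat.find_spec hex, fun j hj => Nat.find_min hex hj⟩

lemma iterate_step_filling (hf : IsFillingF n cells f) (m : ℕ) :
    IsFillingF n cells ((stepFun n cells)^[m] f) := by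
  induction m with
  | zero => exact hf
  | succ m ih => rw [Function.iterate_succ_apply']; exact step_filling ih

lemma iterate_istep_filling (hf : IsFillingF n cells f) (m : ℕ) :
    IsFillingF n cells ((istepFun n cells)^[m] f) := by
  induction m with
  | zero => exact hf
  | succ m ih => rw [Function.iterate_succ_apply']; exact istep_filling ih

end Aux2


section Aux3

open Finset

variable {n k : ℕ} {cells : Finset (ℕ × ℕ)} {f g T P : ℕ × ℕ → ℕ}

lemma ne_of_fst {a b : ℕ × ℕ} (h : a.1 ≠ b.1) : a ≠ b := fun hc => h (congrArg Prod.fst hc)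
lemma ne_of_snd {a b : ℕ × ℕ} (h : a.2 ≠ b.2) : a ≠ b := fun hc => h (congrArg Prod.snd hc)

/-- The invariant class for the jdt/ijdt micro-reversal. -/
def InvC (n k : ℕ) (cells : Finset (ℕ × ℕ)) (f : ℕ × ℕ → ℕ) : Prop :=
  IsFillingF n cells f ∧
  RestrictedStd cells f (Finset.Icc 1 k) ∧
  RestrictedStd cells f (Finset.Icc (k + 1) n) ∧
  (∀ a ∈ cells, ∀ d ∈ cells, Adjc a d → f a ≤ k → k < f d →
    ∀ t, IsShort cells f t → f a ≤ t)

lemma InvC.filling (h : InvC n k cells f) : IsFillingF n cells f := h.1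

lemma InvC.small_lt (hC : InvC n k cells f) {a b : ℕ × ℕ} (ha : a ∈ cells) (hb : b ∈ cells)
    (h1 : f a ≤ k) (h2 : f b ≤ k) (hle1 : a.1 ≤ b.1) (hle2 : a.2 ≤ b.2) (hne : a ≠ b) :
    f a < f b :=
  hC.2.1 a ha b hb (Finset.mem_Icc.2 ⟨hC.1.lb ha, h1⟩) (Finset.mem_Icc.2 ⟨hC.1.lb hb, h2⟩)
    hle1 hle2 hne

lemma InvC.big_lt (hC : InvC n k cells f) {a b : ℕ × ℕ} (ha : a ∈ cells) (hb : b ∈ cells)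
    (h1 : k < f a) (h2 : k < f b) (hle1 : a.1 ≤ b.1) (hle2 : a.2 ≤ b.2) (hne : a ≠ b) :
    f a < f b :=
  hC.2.2.1 a ha b hb (Finset.mem_Icc.2 ⟨by omega, hC.1.ub ha⟩)
    (Finset.mem_Icc.2 ⟨by omega, hC.1.ub hb⟩) hle1 hle2 hne

lemma InvC.bas_le (hC : InvC n k cells f) {a d : ℕ × ℕ} (ha : a ∈ cells) (hd : d ∈ cells)
    (hadj : Adjc a d) (h1 : f a ≤ k) (h2 : k < f d) {t : ℕ} (ht : IsShort cells f t) :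
    f a ≤ t :=
  hC.2.2.2 a ha d hd hadj h1 h2 t ht

/-- A standard filling is restricted-standard for every set of entries. -/
lemma std_restricted (hg : GridS cells) (hf : IsFillingF n cells f)
    (hstd : IsStandardF cells f) (S : Finset ℕ) : RestrictedStd cells f S := by
  intro a ha b hb _ _ h1 h2 hne
  rcases eq_or_ne a.1 b.1 with he1 | he1
  · rcases eq_or_ne a.2 b.2 with he2 | he2
    · exact absurd (by ext <;> omega : a = b) hne
    · exact hstd.1 a ha b hb he1 (by omega)
  · rcases eq_or_ne a.2 b.2 with he2 | he2
    · exact hstd.2 a ha b hb he2 (by omega)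
    · have hcor : (b.1, a.2) ∈ cells := hg.corner a ha b hb h1 h2
      have l1 : f a < f (b.1, a.2) := hstd.2 a ha _ hcor rfl (by simp; omega)
      have l2 : f (b.1, a.2) < f b := hstd.1 _ hcor b hb rfl (by simp; omega)
      omega

lemma InvC.of_std (hg : GridS cells) (hf : IsFillingF n cells f)
    (hstd : IsStandardF cells f) : InvC n k cells f := by
  refine ⟨hf, std_restricted hg hf hstd _, std_restricted hg hf hstd _, ?_⟩
  intro a _ d _ _ _ _ t ht
  exact absurd ht (no_short_of_std hstd t)

/-- First-transition lemma. -/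
lemma exists_transition {Q : ℕ → Prop} {j0 j1 : ℕ} (h0 : Q j0) (h1 : ¬ Q j1) (hle : j0 ≤ j1) :
    ∃ j, j0 < j ∧ j ≤ j1 ∧ ¬ Q j ∧ Q (j - 1) := by
  classical
  have hlt : j0 < j1 := lt_of_le_of_ne hle (fun h => h1 (h ▸ h0))
  have hne : {j | j0 < j ∧ j ≤ j1 ∧ ¬ Q j}.Nonempty := ⟨j1, hlt, le_rfl, h1⟩
  set j := sInf {j | j0 < j ∧ j ≤ j1 ∧ ¬ Q j} with hj
  obtain ⟨hj0, hj1, hjq⟩ := Nat.sInf_mem hne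
  refine ⟨j, hj0, hj1, hjq, ?_⟩
  rcases eq_or_lt_of_le (show j0 ≤ j - 1 by omega) with he | hlt2
  · rw [← he]; exact h0
  · by_contra hq
    have hmem : j - 1 ∈ {j | j0 < j ∧ j ≤ j1 ∧ ¬ Q j} := ⟨hlt2, by omega, hq⟩
    have := Nat.sInf_le hmem
    omega

/-- Characterization of tall entries of the relabeled filling `-k + f`. -/
lemma isTall_rel_iff (hn : 1 ≤ n) (hk1 : 1 ≤ k) (hkn : k ≤ n) (hC : InvC n k cells f) {v : ℕ} :
    IsTall cells (mapEntries cells (rotval n (n - k)) f) v ↔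
    ∃ a ∈ cells, ∃ d ∈ cells, Adjc a d ∧ f a ≤ k ∧ k < f d ∧ v = f a + (n - k) := by
  have hf := hC.filling
  constructor
  · rintro ⟨c, hc, hval, hcase⟩
    have hcv : rotval n (n - k) (f c) = v := by
      rw [← hval, mapEntries_mem hc]
    rcases hcase with ⟨hd, hlt⟩ | ⟨hd, hlt⟩
    · set d : ℕ × ℕ := (c.1 + 1, c.2) with hddef
      have hdv : mapEntries cells (rotval n (n - k)) f d = rotval n (n - k) (f d) :=
        mapEntries_mem hd
      rw [hdv, ← hcv] at hlt
      have hadj : Adjc c d := Or.inl rfl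
      rcases le_or_gt (f c) k with hc1 | hc1 <;> rcases le_or_gt (f d) k with hd1 | hd1
      · exfalso
        rw [rotval_small hkn (hf.lb hc) hc1, rotval_small hkn (hf.lb hd) hd1] at hlt
        have := hC.small_lt hc hd hc1 hd1 hadj.le1 hadj.le2 hadj.ne
        omega
      · refine ⟨c, hc, d, hd, hadj, hc1, hd1, ?_⟩
        rw [rotval_small hkn (hf.lb hc) hc1] at hcv
        omega
      · exfalso
        rw [rotval_big hkn hc1 (hf.ub hc), rotval_small hkn (hf.lb hd) hd1] at hlt
        have := hf.ub hc
        omega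
      · exfalso
        rw [rotval_big hkn hc1 (hf.ub hc), rotval_big hkn hd1 (hf.ub hd)] at hlt
        have := hC.big_lt hc hd hc1 hd1 hadj.le1 hadj.le2 hadj.ne
        omega
    · set d : ℕ × ℕ := (c.1, c.2 + 1) with hddef
      have hdv : mapEntries cells (rotval n (n - k)) f d = rotval n (n - k) (f d) :=
        mapEntries_mem hd
      rw [hdv, ← hcv] at hlt
      have hadj : Adjc c d := Or.inr rfl
      rcases le_or_gt (f c) k with hc1 | hc1 <;> rcases le_or_gt (f d) k with hd1 | hd1
      · exfalso
        rw [rotval_small hkn (hf.lb hc) hc1, rotval_small hkn (hf.lb hd) hd1] at hlt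
        have := hC.small_lt hc hd hc1 hd1 hadj.le1 hadj.le2 hadj.ne
        omega
      · refine ⟨c, hc, d, hd, hadj, hc1, hd1, ?_⟩
        rw [rotval_small hkn (hf.lb hc) hc1] at hcv
        omega
      · exfalso
        rw [rotval_big hkn hc1 (hf.ub hc), rotval_small hkn (hf.lb hd) hd1] at hlt
        have := hf.ub hc
        omega
      · exfalso
        rw [rotval_big hkn hc1 (hf.ub hc), rotval_big hkn hd1 (hf.ub hd)] at hlt
        have := hC.big_lt hc hd hc1 hd1 hadj.le1 hadj.le2 hadj.ne
        omega
  · rintro ⟨a, ha, d, hd, hadj, h1, h2, rfl⟩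
    refine ⟨a, ha, ?_, ?_⟩
    · rw [mapEntries_mem ha, rotval_small hkn (hC.filling.lb ha) h1]
    · have hval : mapEntries cells (rotval n (n - k)) f d = f d - k := by
        rw [mapEntries_mem hd, rotval_big hkn h2 (hC.filling.ub hd)]
      have hlt : mapEntries cells (rotval n (n - k)) f d < f a + (n - k) := by
        rw [hval]
        have := hC.filling.ub hd
        have := hC.filling.lb ha
        omega
      rcases hadj with hh | hh
      · exact Or.inl ⟨by rw [← hh]; exact hd, by rw [← hh]; exact hlt⟩
      · exact Or.inr ⟨by rw [← hh]; exact hd, by rw [← hh]; exact hlt⟩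

lemma rel_filling (hn : 1 ≤ n) (hkn : k ≤ n) (hf : IsFillingF n cells f) :
    IsFillingF n cells (mapEntries cells (rotval n (n - k)) f) :=
  hf.mapEntries_bij (rotval_bijOn hn (by omega))

lemma unrel_rel (hn : 1 ≤ n) (hkn : k ≤ n) (hf : IsFillingF n cells f) :
    mapEntries cells (rotval n k) (mapEntries cells (rotval n (n - k)) f) = f := by
  rw [mapEntries_comp]
  exact mapEntries_eq_self hf.2 fun c hc => rotval_cancel hn hkn (hf.lb hc) (hf.ub hc)

lemma rel_unrel (hn : 1 ≤ n) (hkn : k ≤ n) (hf : IsFillingF n cells f) :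
    mapEntries cells (rotval n (n - k)) (mapEntries cells (rotval n k) f) = f := by
  rw [mapEntries_comp]
  exact mapEntries_eq_self hf.2 fun c hc => rotval_cancel' hn hkn (hf.lb hc) (hf.ub hc)

end Aux3


section Aux4

open Finset

variable {n k : ℕ} {cells : Finset (ℕ × ℕ)} {f : ℕ × ℕ → ℕ}

lemma prod_eq {a b : ℕ × ℕ} (h1 : a.1 = b.1) (h2 : a.2 = b.2) : a = b :=
  Prod.ext_iff.2 ⟨h1, h2⟩

/-- The forward micro lemma: one `jdt` step preserves the invariant class and is
undone by one `ijdt` step after relabeling. -/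
theorem fwd_micro (hg : GridS cells) (hn : 1 ≤ n) (hk1 : 1 ≤ k) (hkn : k ≤ n)
    (hC : InvC n k cells f) (hne : (shorts n cells f).Nonempty) :
    InvC n k cells (stepFun n cells f) ∧
    istepFun n cells (mapEntries cells (rotval n (n - k)) (stepFun n cells f))
      = mapEntries cells (rotval n (n - k)) f ∧
    ¬ IsStandardF cells (mapEntries cells (rotval n (n - k)) (stepFun n cells f)) := by
  classical
  obtain ⟨c, c', hc, hc', hadj, hfc, hflt, hub, heq⟩ := step_spec hC.1 hne
  have hmin : ∀ t, IsShort cells f t → f c ≤ t := by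
    intro t ht
    rw [hfc]
    exact Finset.min'_le _ _ ((mem_shorts_iff hC.1).2 ht)
  have hcshort : IsShort cells f (f c) := by
    rw [hfc]; exact (mem_shorts_iff hC.1).1 (Finset.min'_mem _ hne)
  have hsmall : f c ≤ k := by
    by_contra hcon
    push_neg at hcon
    have : f c' < f c := hC.big_lt hc' hc (by omega) hcon hadj.le1 hadj.le2 hadj.ne
    omega
  have hMbig : k < f c' := by
    by_contra hcon
    push_neg at hcon
    have : f c' < f c := hC.small_lt hc' hc hcon hsmall hadj.le1 hadj.le2 hadj.ne
    omega
  set g := stepFun n cells f with hgdef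
  have hgf : IsFillingF n cells g := step_filling hC.1
  have hgc : g c = f c' := by rw [heq]; exact comp_swap_left
  have hgc' : g c' = f c := by rw [heq]; exact comp_swap_right
  have hgo : ∀ d : ℕ × ℕ, d ≠ c → d ≠ c' → g d = f d := by
    intro d h1 h2; rw [heq]; exact comp_swap_other h1 h2
  -- ============ I1 ============
  have hI1 : RestrictedStd cells g (Finset.Icc 1 k) := by
    intro a ha b hb hfa hfb h1 h2 hne'
    rw [Finset.mem_Icc] at hfa hfb
    rcases eq_or_ne a c with hqhac | hac
    · obtain rfl := hqhac.symm
      rw [hgc] at hfa; omega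
    rcases eq_or_ne b c with hqhbc | hbc
    · obtain rfl := hqhbc.symm
      rw [hgc] at hfb; omega
    rcases eq_or_ne a c' with hqhac' | hac'
    · obtain rfl := hqhac'.symm
      rcases eq_or_ne b c' with hqhbc' | hbc'
      · obtain rfl := hqhbc'.symm
        exact absurd rfl hne'
      rw [hgc'] at hfa ⊢
      rw [hgo b hbc hbc'] at hfb ⊢
      by_cases hcb : c.1 ≤ b.1 ∧ c.2 ≤ b.2
      · exact hC.small_lt hc hb hsmall hfb.2 hcb.1 hcb.2 (Ne.symm hbc)
      · rcases hadj with hdown | hright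
        · -- c = (c'.1+1, c'.2) : b lies in the row of c', strictly right of c'
          have hcfst : c.1 = c'.1 + 1 := by rw [hdown]
          have hcsnd : c.2 = c'.2 := by rw [hdown]
          have hb1 : b.1 = c'.1 := by
            have hnb : ¬ (c.1 ≤ b.1) := fun hh => hcb ⟨hh, by omega⟩
            omega
          have hb2 : c'.2 < b.2 := by
            rcases eq_or_ne b.2 c'.2 with he | hb2ne
            · exact absurd (prod_eq hb1 he) hbc'
            · omega
          have hbeq : ((c'.1, b.2) : ℕ × ℕ) = b := by rw [← hb1]
          obtain ⟨j, hj1, hj2, hjq, hjq'⟩ := exists_transition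
            (Q := fun j => k < f (c'.1, j)) (j0 := c'.2) (j1 := b.2)
            (show k < f (c'.1, c'.2) from hMbig)
            (by show ¬ k < f (c'.1, b.2); rw [hbeq]; omega) (le_of_lt hb2)
          have hymem : ((c'.1, j) : ℕ × ℕ) ∈ cells :=
            hg.rowcx c' hc' b hb hb1.symm j (by omega) hj2
          have hy1mem : ((c'.1, j - 1) : ℕ × ℕ) ∈ cells :=
            hg.rowcx c' hc' b hb hb1.symm (j - 1) (by omega) (by omega)
          have hyshort : IsShort cells f (f (c'.1, j)) :=
            ⟨(c'.1, j), hymem, rfl, Or.inr ⟨show 1 ≤ j by omega, hy1mem,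
              show f (c'.1, j) < f (c'.1, j - 1) by omega⟩⟩
          have h5 : f c ≤ f (c'.1, j) := hmin _ hyshort
          have h6 : f c ≠ f (c'.1, j) := fun hcon =>
            absurd (congrArg Prod.fst (hC.1.inj hc hymem hcon)) (by omega)
          have h7 : f (c'.1, j) ≤ f b := by
            rcases eq_or_ne j b.2 with rfl | hjb
            · rw [hbeq]
            · exact le_of_lt (hC.small_lt hymem hb (by omega) hfb.2 (by omega) (by omega)
                (ne_of_snd (by omega)))
          omega
        · -- c = (c'.1, c'.2+1) : b lies in the column of c', strictly below c'
          have hcfst : c.1 = c'.1 := by rw [hright]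
          have hcsnd : c.2 = c'.2 + 1 := by rw [hright]
          have hb2 : b.2 = c'.2 := by
            have hnb : ¬ (c.2 ≤ b.2) := fun hh => hcb ⟨by omega, hh⟩
            omega
          have hb1 : c'.1 < b.1 := by
            rcases eq_or_ne b.1 c'.1 with he | hb1ne
            · exact absurd (prod_eq he hb2) hbc'
            · omega
          have hbeq : ((b.1, c'.2) : ℕ × ℕ) = b := by rw [← hb2]
          obtain ⟨j, hj1, hj2, hjq, hjq'⟩ := exists_transition
            (Q := fun i => k < f (i, c'.2)) (j0 := c'.1) (j1 := b.1)
            (show k < f (c'.1, c'.2) from hMbig)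
            (by show ¬ k < f (b.1, c'.2); rw [hbeq]; omega) (le_of_lt hb1)
          have hymem : ((j, c'.2) : ℕ × ℕ) ∈ cells :=
            hg.colcx c' hc' b hb hb2.symm j (by omega) hj2
          have hy1mem : ((j - 1, c'.2) : ℕ × ℕ) ∈ cells :=
            hg.colcx c' hc' b hb hb2.symm (j - 1) (by omega) (by omega)
          have hyshort : IsShort cells f (f (j, c'.2)) :=
            ⟨(j, c'.2), hymem, rfl, Or.inl ⟨show 1 ≤ j by omega, hy1mem,
              show f (j, c'.2) < f (j - 1, c'.2) by omega⟩⟩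
          have h5 : f c ≤ f (j, c'.2) := hmin _ hyshort
          have h6 : f c ≠ f (j, c'.2) := fun hcon =>
            absurd (congrArg Prod.snd (hC.1.inj hc hymem hcon)) (by omega)
          have h7 : f (j, c'.2) ≤ f b := by
            rcases eq_or_ne j b.1 with rfl | hjb
            · rw [hbeq]
            · exact le_of_lt (hC.small_lt hymem hb (by omega) hfb.2 (by omega) (by omega)
                (ne_of_fst (by omega)))
          omega
    rcases eq_or_ne b c' with hqhbc' | hbc'
    · obtain rfl := hqhbc'.symm
      rw [hgc'] at hfb ⊢
      rw [hgo a hac hac'] at hfa ⊢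
      exact hC.small_lt ha hc hfa.2 hsmall (le_trans h1 hadj.le1) (le_trans h2 hadj.le2) hac
    · rw [hgo a hac hac'] at hfa ⊢
      rw [hgo b hbc hbc'] at hfb ⊢
      exact hC.small_lt ha hb hfa.2 hfb.2 h1 h2 hne'
  -- ============ I2 ============
  have hI2 : RestrictedStd cells g (Finset.Icc (k + 1) n) := by
    intro a ha b hb hfa hfb h1 h2 hne'
    rw [Finset.mem_Icc] at hfa hfb
    rcases eq_or_ne a c' with hqhac' | hac'
    · obtain rfl := hqhac'.symm
      rw [hgc'] at hfa; omega
    rcases eq_or_ne b c' with hqhbc' | hbc'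
    · obtain rfl := hqhbc'.symm
      rw [hgc'] at hfb; omega
    rcases eq_or_ne a c with hqhac | hac
    · obtain rfl := hqhac.symm
      rcases eq_or_ne b c with hqhbc | hbc
      · obtain rfl := hqhbc.symm
        exact absurd rfl hne'
      rw [hgc] at hfa ⊢
      rw [hgo b hbc hbc'] at hfb ⊢
      exact hC.big_lt hc' hb (by omega) (by omega) (le_trans hadj.le1 h1)
        (le_trans hadj.le2 h2) (Ne.symm hbc')
    rcases eq_or_ne b c with hqhbc | hbc
    · obtain rfl := hqhbc.symm
      rw [hgc] at hfb ⊢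
      rw [hgo a hac hac'] at hfa ⊢
      by_cases hacp : a.1 ≤ c'.1 ∧ a.2 ≤ c'.2
      · exact hC.big_lt ha hc' (by omega) hMbig hacp.1 hacp.2 hac'
      · rcases hadj with hdown | hright
        · -- c = (c'.1+1, c'.2); a in the row of c, strictly left of c
          have hcfst : c.1 = c'.1 + 1 := by rw [hdown]
          have hcsnd : c.2 = c'.2 := by rw [hdown]
          have ha1 : a.1 = c.1 := by
            have hnb : ¬ (a.1 ≤ c'.1) := fun hh => hacp ⟨hh, by omega⟩
            omega
          have ha2 : a.2 < c.2 := by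
            rcases eq_or_ne a.2 c.2 with he | hne2
            · exact absurd (prod_eq ha1 he) hac
            · omega
          have haeq : ((c.1, a.2) : ℕ × ℕ) = a := by rw [← ha1]
          have hwmem : ((c.1, c.2 - 1) : ℕ × ℕ) ∈ cells := by
            rw [← ha1]; exact hg.rowcx a ha c hc ha1 (c.2 - 1) (by omega) (by omega)
          have hwadj : Adjc (c.1, c.2 - 1) c := Or.inr (prod_eq (by simp) (by simp <;> omega))
          have hwub : f (c.1, c.2 - 1) ≤ f c' := hub _ hwmem hwadj
          have hwne : ((c.1, c.2 - 1) : ℕ × ℕ) ≠ c' := ne_of_fst (by simp <;> omega)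
          have hwlt : f (c.1, c.2 - 1) < f c' :=
            lt_of_le_of_ne hwub (fun hcon => hwne (hC.1.inj hwmem hc' hcon))
          have hwbig : k < f (c.1, c.2 - 1) := by
            by_contra hcon
            push_neg at hcon
            obtain ⟨j, hj1, hj2, hjq, hjq'⟩ := exists_transition
              (Q := fun j => k < f (c.1, j)) (j0 := a.2) (j1 := c.2 - 1)
              (by show k < f (c.1, a.2); rw [haeq]; omega) (by omega) (by omega)
            have hymem : ((c.1, j) : ℕ × ℕ) ∈ cells := by
              rw [← ha1]; exact hg.rowcx a ha c hc ha1 j (by omega) (by omega)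
            have hy1mem : ((c.1, j - 1) : ℕ × ℕ) ∈ cells := by
              rw [← ha1]; exact hg.rowcx a ha c hc ha1 (j - 1) (by omega) (by omega)
            have hyshort : IsShort cells f (f (c.1, j)) :=
              ⟨(c.1, j), hymem, rfl, Or.inr ⟨show 1 ≤ j by omega, hy1mem,
                show f (c.1, j) < f (c.1, j - 1) by omega⟩⟩
            have h5 : f c ≤ f (c.1, j) := hmin _ hyshort
            have h6 : f c ≠ f (c.1, j) := fun hcon2 =>
              absurd (congrArg Prod.snd (hC.1.inj hc hymem hcon2)) (by omega)
            have h7 : f (c.1, j) ≤ f (c.1, c.2 - 1) := by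
              rcases eq_or_ne j (c.2 - 1) with rfl | hjb
              · exact le_rfl
              · exact le_of_lt (hC.small_lt hymem hwmem (by omega) hcon (by simp)
                  (by simp <;> omega) (ne_of_snd (by simp <;> omega)))
            have h8 : f (c.1, c.2 - 1) < f c := hC.small_lt hwmem hc hcon hsmall (by simp)
              (by simp <;> omega) (ne_of_snd (by simp <;> omega))
            omega
          have h9 : f a ≤ f (c.1, c.2 - 1) := by
            rcases eq_or_ne a.2 (c.2 - 1) with he | hne2
            · rw [show a = ((c.1, c.2 - 1) : ℕ × ℕ) from prod_eq (by simpa using ha1)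
                (by simpa using he)]
            · exact le_of_lt (hC.big_lt ha hwmem (by omega) hwbig (by simp <;> omega)
                (by simp <;> omega) (ne_of_snd (by simp <;> omega)))
          omega
        · -- c = (c'.1, c'.2+1); a in the column of c, strictly above c
          have hcfst : c.1 = c'.1 := by rw [hright]
          have hcsnd : c.2 = c'.2 + 1 := by rw [hright]
          have ha2 : a.2 = c.2 := by
            have hnb : ¬ (a.2 ≤ c'.2) := fun hh => hacp ⟨by omega, hh⟩
            omega
          have ha1 : a.1 < c.1 := by
            rcases eq_or_ne a.1 c.1 with he | hne1
            · exact absurd (prod_eq he ha2) hac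
            · omega
          have haeq : ((a.1, c.2) : ℕ × ℕ) = a := by rw [← ha2]
          have hwmem : ((c.1 - 1, c.2) : ℕ × ℕ) ∈ cells := by
            rw [← ha2]; exact hg.colcx a ha c hc ha2 (c.1 - 1) (by omega) (by omega)
          have hwadj : Adjc (c.1 - 1, c.2) c := Or.inl (prod_eq (by simp <;> omega) (by simp))
          have hwub : f (c.1 - 1, c.2) ≤ f c' := hub _ hwmem hwadj
          have hwne : ((c.1 - 1, c.2) : ℕ × ℕ) ≠ c' := ne_of_snd (by simp <;> omega)
          have hwlt : f (c.1 - 1, c.2) < f c' :=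
            lt_of_le_of_ne hwub (fun hcon => hwne (hC.1.inj hwmem hc' hcon))
          have hwbig : k < f (c.1 - 1, c.2) := by
            by_contra hcon
            push_neg at hcon
            obtain ⟨j, hj1, hj2, hjq, hjq'⟩ := exists_transition
              (Q := fun i => k < f (i, c.2)) (j0 := a.1) (j1 := c.1 - 1)
              (by show k < f (a.1, c.2); rw [haeq]; omega) (by omega) (by omega)
            have hymem : ((j, c.2) : ℕ × ℕ) ∈ cells := by
              rw [← ha2]; exact hg.colcx a ha c hc ha2 j (by omega) (by omega)
            have hy1mem : ((j - 1, c.2) : ℕ × ℕ) ∈ cells := by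
              rw [← ha2]; exact hg.colcx a ha c hc ha2 (j - 1) (by omega) (by omega)
            have hyshort : IsShort cells f (f (j, c.2)) :=
              ⟨(j, c.2), hymem, rfl, Or.inl ⟨show 1 ≤ j by omega, hy1mem,
                show f (j, c.2) < f (j - 1, c.2) by omega⟩⟩
            have h5 : f c ≤ f (j, c.2) := hmin _ hyshort
            have h6 : f c ≠ f (j, c.2) := fun hcon2 =>
              absurd (congrArg Prod.fst (hC.1.inj hc hymem hcon2)) (by omega)
            have h7 : f (j, c.2) ≤ f (c.1 - 1, c.2) := by
              rcases eq_or_ne j (c.1 - 1) with rfl | hjb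
              · exact le_rfl
              · exact le_of_lt (hC.small_lt hymem hwmem (by omega) hcon (by simp <;> omega)
                  (by simp) (ne_of_fst (by simp <;> omega)))
            have h8 : f (c.1 - 1, c.2) < f c := hC.small_lt hwmem hc hcon hsmall
              (by simp <;> omega) (by simp) (ne_of_fst (by simp <;> omega))
            omega
          have h9 : f a ≤ f (c.1 - 1, c.2) := by
            rcases eq_or_ne a.1 (c.1 - 1) with he | hne1
            · rw [show a = ((c.1 - 1, c.2) : ℕ × ℕ) from prod_eq (by simpa using he)
                (by simpa using ha2)]
            · exact le_of_lt (hC.big_lt ha hwmem (by omega) hwbig (by simp <;> omega)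
                (by simp <;> omega) (ne_of_fst (by simp <;> omega)))
          omega
    · rw [hgo a hac hac'] at hfa ⊢
      rw [hgo b hbc hbc'] at hfb ⊢
      exact hC.big_lt ha hb (by omega) (by omega) h1 h2 hne'
  -- ============ I3 : alpha ============
  have halpha : ∀ a ∈ cells, ∀ d ∈ cells, Adjc a d → g a ≤ k → k < g d → g a ≤ f c := by
    intro a ha d hd hadj' h1 h2
    rcases eq_or_ne a c' with hqhac' | hac'
    · obtain rfl := hqhac'.symm
      rw [hgc']
    rcases eq_or_ne a c with hqhac | hac
    · obtain rfl := hqhac.symm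
      rw [hgc] at h1; omega
    rw [hgo a hac hac'] at h1 ⊢
    rcases eq_or_ne d c with hqhdc | hdc
    · obtain rfl := hqhdc.symm
      exact le_of_lt (hC.small_lt ha hc h1 hsmall hadj'.le1 hadj'.le2 hadj'.ne)
    rcases eq_or_ne d c' with hqhdc' | hdc'
    · obtain rfl := hqhdc'.symm
      rw [hgc'] at h2; omega
    · rw [hgo d hdc hdc'] at h2
      exact hC.bas_le ha hd hadj' h1 h2 hcshort
  -- ============ I3 : beta ============
  have hbeta : ∀ t, IsShort cells g t → f c ≤ t := by
    rintro t ⟨w, hw, hfw, hcase⟩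
    rcases eq_or_ne w c with hqhwc | hwc
    · obtain rfl := hqhwc.symm
      rw [← hfw, hgc]; exact le_of_lt hflt
    rcases eq_or_ne w c' with hqhwc' | hwc'
    · obtain rfl := hqhwc'.symm
      rw [← hfw, hgc']
    rw [hgo w hwc hwc'] at hfw
    rcases hcase with ⟨hw1, hupmem, hlt'⟩ | ⟨hw1, hleftmem, hlt'⟩
    · rcases eq_or_ne ((w.1 - 1, w.2) : ℕ × ℕ) c with hup | hupne
      · rw [hup, hgc] at hlt'
        have hadjcw : Adjc c w := Or.inl (prod_eq (by
            have := congrArg Prod.fst hup; simp at this; omega)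
          (by have := congrArg Prod.snd hup; simp at this; omega))
        rcases le_or_gt t k with ht | ht
        · have := hC.small_lt hc hw hsmall (hfw ▸ ht) hadjcw.le1 hadjcw.le2 hadjcw.ne
          omega
        · omega
      rcases eq_or_ne ((w.1 - 1, w.2) : ℕ × ℕ) c' with hup' | hupne'
      · rw [hup', hgc'] at hlt'
        have hshort' : IsShort cells f t :=
          ⟨w, hw, hfw, Or.inl ⟨hw1, hupmem, by rw [hup']; omega⟩⟩
        exact hmin _ hshort'
      · rw [hgo _ hupne hupne'] at hlt'
        exact hmin _ ⟨w, hw, hfw, Or.inl ⟨hw1, hupmem, by omega⟩⟩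
    · rcases eq_or_ne ((w.1, w.2 - 1) : ℕ × ℕ) c with hup | hupne
      · rw [hup, hgc] at hlt'
        have hadjcw : Adjc c w := Or.inr (prod_eq (by
            have := congrArg Prod.fst hup; simp at this; omega)
          (by have := congrArg Prod.snd hup; simp at this; omega))
        rcases le_or_gt t k with ht | ht
        · have := hC.small_lt hc hw hsmall (hfw ▸ ht) hadjcw.le1 hadjcw.le2 hadjcw.ne
          omega
        · omega
      rcases eq_or_ne ((w.1, w.2 - 1) : ℕ × ℕ) c' with hup' | hupne'
      · rw [hup', hgc'] at hlt'
        have hshort' : IsShort cells f t :=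
          ⟨w, hw, hfw, Or.inr ⟨hw1, hleftmem, by rw [hup']; omega⟩⟩
        exact hmin _ hshort'
      · rw [hgo _ hupne hupne'] at hlt'
        exact hmin _ ⟨w, hw, hfw, Or.inr ⟨hw1, hleftmem, by omega⟩⟩
  have hCg : InvC n k cells g :=
    ⟨hgf, hI1, hI2, fun a ha d hd hadj' h1 h2 t ht =>
      le_trans (halpha a ha d hd hadj' h1 h2) (hbeta t ht)⟩
  -- ============ the ijdt step undoes the jdt step ============
  set relg := mapEntries cells (rotval n (n - k)) g with hrelgdef
  have hrelgf : IsFillingF n cells relg := rel_filling hn hkn hgf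
  have htallmem : IsTall cells relg (f c + (n - k)) := by
    rw [hrelgdef]
    refine (isTall_rel_iff hn hk1 hkn hCg).2 ⟨c', hc', c, hc, hadj, ?_, ?_, ?_⟩
    · rw [hgc']; exact hsmall
    · rw [hgc]; exact hMbig
    · rw [hgc']
  have htne : (talls n cells relg).Nonempty :=
    ⟨f c + (n - k), (mem_talls_iff hrelgf).2 htallmem⟩
  have hmax : (talls n cells relg).max' htne = f c + (n - k) := by
    apply le_antisymm
    · apply Finset.max'_le
      intro v hv
      obtain ⟨a, ha, d, hd, hadj', h1, h2, rfl⟩ :=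
        (isTall_rel_iff hn hk1 hkn hCg).1 ((mem_talls_iff hrelgf).1 hv)
      have := halpha a ha d hd hadj' h1 h2
      omega
    · exact Finset.le_max' _ _ ((mem_talls_iff hrelgf).2 htallmem)
  obtain ⟨e, e'', he, he'', headj, heval, hlt2, hub2, heq2⟩ := istep_spec hrelgf htne
  rw [hmax] at heval
  have hrelgc' : relg c' = f c + (n - k) := by
    rw [hrelgdef, mapEntries_mem hc', hgc', rotval_small hkn (hC.1.lb hc) hsmall]
  obtain rfl := (hrelgf.inj he hc' (by rw [heval, hrelgc'])).symm
  have hrelgc : relg c = f c' - k := by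
    rw [hrelgdef, mapEntries_mem hc, hgc, rotval_big hkn hMbig (hC.1.ub hc')]
  have hee'' : e'' = c := by
    by_contra hcon
    have he''ne' : e'' ≠ c' := Ne.symm (Adjc.ne headj)
    have hge'' : g e'' = f e'' := hgo e'' hcon he''ne'
    have hub2c : relg e'' ≤ relg c := hub2 c hc hadj
    rcases le_or_gt (f e'') k with hsm | hbg
    · have : relg e'' = f e'' + (n - k) := by
        rw [hrelgdef, mapEntries_mem he'', hge'', rotval_small hkn (hC.1.lb he'') hsm]
      have hub := hC.1.ub hc'
      have hlb := hC.1.lb he''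
      rw [this, hrelgc] at hub2c
      omega
    · have : relg e'' = f e'' - k := by
        rw [hrelgdef, mapEntries_mem he'', hge'', rotval_big hkn hbg (hC.1.ub he'')]
      have hbig2 := hC.big_lt hc' he'' hMbig hbg headj.le1 headj.le2 headj.ne
      rw [this, hrelgc] at hub2c
      omega
  obtain rfl := hee''.symm
  have hswap : istepFun n cells relg = mapEntries cells (rotval n (n - k)) f := by
    rw [heq2, hrelgdef, heq, mapEntries_comp_swap hc hc', Equiv.swap_comm c' c]
    exact comp_swap_invol
  refine ⟨hCg, hswap, ?_⟩
  intro hstd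
  exact no_tall_of_std hstd _ htallmem

end Aux4


section Aux5

open Finset

variable {n k : ℕ} {cells : Finset (ℕ × ℕ)} {f : ℕ × ℕ → ℕ}

/-- The backward micro lemma: one `ijdt` step (after relabeling) is undone by one
`jdt` step, and preserves the invariant class. -/
theorem bwd_micro (hg : GridS cells) (hn : 1 ≤ n) (hk1 : 1 ≤ k) (hkn : k ≤ n)
    (hC : InvC n k cells f)
    (hne : (talls n cells (mapEntries cells (rotval n (n - k)) f)).Nonempty) :
    InvC n k cells (mapEntries cells (rotval n k)
      (istepFun n cells (mapEntries cells (rotval n (n - k)) f))) ∧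
    stepFun n cells (mapEntries cells (rotval n k)
      (istepFun n cells (mapEntries cells (rotval n (n - k)) f))) = f ∧
    ¬ IsStandardF cells (mapEntries cells (rotval n k)
      (istepFun n cells (mapEntries cells (rotval n (n - k)) f))) := by
  classical
  set relf := mapEntries cells (rotval n (n - k)) f with hrelfdef
  have hrf : IsFillingF n cells relf := rel_filling hn hkn hC.1
  obtain ⟨e, e'', he, he'', headj, heval, hlt2, hub2, heq2⟩ := istep_spec hrf hne
  obtain ⟨a0, ha0, d0, hd0, hadj0, h01, h02, hv0⟩ :=
    (isTall_rel_iff hn hk1 hkn hC).1 ((mem_talls_iff hrf).1 (Finset.max'_mem _ hne))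
  have hrelfa0 : relf a0 = f a0 + (n - k) := by
    rw [hrelfdef, mapEntries_mem ha0, rotval_small hkn (hC.1.lb ha0) h01]
  have hee : e = a0 := hrf.inj he ha0 (by rw [heval, hrelfa0]; exact hv0)
  obtain rfl := hee
  -- now the cell of the max tall is `e` with small value `f e`
  have hrelfe : relf e = f e + (n - k) := hrelfa0
  have hsmax : ∀ a ∈ cells, ∀ d ∈ cells, Adjc a d → f a ≤ k → k < f d → f a ≤ f e := by
    intro a ha d hd hadj' h1 h2
    have hmem : f a + (n - k) ∈ talls n cells relf := (mem_talls_iff hrf).2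
      ((isTall_rel_iff hn hk1 hkn hC).2 ⟨a, ha, d, hd, hadj', h1, h2, rfl⟩)
    have hle := Finset.le_max' _ _ hmem
    rw [← heval, hrelfe] at hle
    omega
  have hUbig : k < f e'' := by
    by_contra hcon
    push_neg at hcon
    have h1 : relf e'' = f e'' + (n - k) := by
      rw [hrelfdef, mapEntries_mem he'', rotval_small hkn (hC.1.lb he'') hcon]
    rw [h1, hrelfe] at hlt2
    have := hC.small_lt he he'' h01 hcon headj.le1 headj.le2 headj.ne
    omega
  have hrelfe'' : relf e'' = f e'' - k := by
    rw [hrelfdef, mapEntries_mem he'', rotval_big hkn hUbig (hC.1.ub he'')]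
  have hUmin : ∀ w ∈ cells, Adjc e w → k < f w → f e'' ≤ f w := by
    intro w hw hadj' hbig
    have h1 := hub2 w hw hadj'
    have h2 : relf w = f w - k := by
      rw [hrelfdef, mapEntries_mem hw, rotval_big hkn hbig (hC.1.ub hw)]
    rw [hrelfe'', h2] at h1
    omega
  set g := mapEntries cells (rotval n k) (istepFun n cells relf) with hgdef
  have hgeq : g = f ∘ (Equiv.swap e e'') := by
    rw [hgdef, heq2, mapEntries_comp_swap he he'', hrelfdef, unrel_rel hn hkn hC.1]
  have hgf : IsFillingF n cells g := by
    rw [hgeq]; exact filling_comp_swap hC.1 he he''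
  have hge : g e = f e'' := by rw [hgeq]; exact comp_swap_left
  have hge'' : g e'' = f e := by rw [hgeq]; exact comp_swap_right
  have hgo : ∀ d : ℕ × ℕ, d ≠ e → d ≠ e'' → g d = f d := by
    intro d h1 h2; rw [hgeq]; exact comp_swap_other h1 h2
  have hflt : f e < f e'' := by omega
  -- ============ I1 ============
  have hI1 : RestrictedStd cells g (Finset.Icc 1 k) := by
    intro a ha b hb hfa hfb h1 h2 hne'
    rw [Finset.mem_Icc] at hfa hfb
    rcases eq_or_ne a e with hqa | hae
    · obtain rfl := hqa.symm
      rw [hge] at hfa; omega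
    rcases eq_or_ne b e with hqb | hbe
    · obtain rfl := hqb.symm
      rw [hge] at hfb; omega
    rcases eq_or_ne a e'' with hqa | hae''
    · obtain rfl := hqa.symm
      rcases eq_or_ne b e'' with hqb | hbe''
      · obtain rfl := hqb.symm
        exact absurd rfl hne'
      rw [hge''] at hfa ⊢
      rw [hgo b hbe hbe''] at hfb ⊢
      exact hC.small_lt he hb h01 hfb.2 (le_trans headj.le1 h1) (le_trans headj.le2 h2)
        (Ne.symm hbe)
    rcases eq_or_ne b e'' with hqb | hbe''
    · obtain rfl := hqb.symm
      rw [hge''] at hfb ⊢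
      rw [hgo a hae hae''] at hfa ⊢
      by_cases hap : a.1 ≤ e.1 ∧ a.2 ≤ e.2
      · exact hC.small_lt ha he hfa.2 h01 hap.1 hap.2 hae
      · rcases headj with hdown | hright
        · -- e'' = (e.1+1, e.2) : a in row e''.1, strictly left of e''
          have hefst : e''.1 = e.1 + 1 := by rw [hdown]
          have hesnd : e''.2 = e.2 := by rw [hdown]
          have ha1 : a.1 = e''.1 := by
            have hnb : ¬ (a.1 ≤ e.1) := fun hh => hap ⟨hh, by omega⟩
            omega
          have ha2 : a.2 < e''.2 := by
            rcases eq_or_ne a.2 e''.2 with heq' | hne2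
            · exact absurd (prod_eq ha1 heq') hae''
            · omega
          have haeq : ((e''.1, a.2) : ℕ × ℕ) = a := by rw [← ha1]
          have heeq : ((e''.1, e''.2) : ℕ × ℕ) = e'' := rfl
          obtain ⟨j, hj1, hj2, hjq, hjq'⟩ := exists_transition
            (Q := fun j => ¬ k < f (e''.1, j)) (j0 := a.2) (j1 := e''.2)
            (by show ¬ k < f (e''.1, a.2); rw [haeq]; omega)
            (by show ¬ ¬ k < f (e''.1, e''.2); rw [heeq]; omega) (le_of_lt ha2)
          rw [not_not] at hjq
          have hymem : ((e''.1, j) : ℕ × ℕ) ∈ cells := by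
            rw [← ha1]; exact hg.rowcx a ha e'' he'' ha1 j (by omega) hj2
          have hy1mem : ((e''.1, j - 1) : ℕ × ℕ) ∈ cells := by
            rw [← ha1]; exact hg.rowcx a ha e'' he'' ha1 (j - 1) (by omega) (by omega)
          have hbas : f (e''.1, j - 1) ≤ f e := hsmax _ hy1mem _ hymem
            (Or.inr (prod_eq (by simp) (by simp <;> omega))) (by omega) hjq
          have h6 : f (e''.1, j - 1) ≠ f e := fun hcon =>
            absurd (congrArg Prod.fst (hC.1.inj hy1mem he hcon)) (by simp <;> omega)
          have h7 : f a ≤ f (e''.1, j - 1) := by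
            rcases eq_or_ne a.2 (j - 1) with heq' | hne2
            · rw [show a = ((e''.1, j - 1) : ℕ × ℕ) from prod_eq (by simpa using ha1)
                (by simpa using heq')]
            · exact le_of_lt (hC.small_lt ha hy1mem hfa.2 (by omega) (by simp <;> omega)
                (by simp <;> omega) (ne_of_snd (by simp <;> omega)))
          omega
        · -- e'' = (e.1, e.2+1) : a in column e''.2, strictly above e''
          have hefst : e''.1 = e.1 := by rw [hright]
          have hesnd : e''.2 = e.2 + 1 := by rw [hright]
          have ha2 : a.2 = e''.2 := by
            have hnb : ¬ (a.2 ≤ e.2) := fun hh => hap ⟨by omega, hh⟩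
            omega
          have ha1 : a.1 < e''.1 := by
            rcases eq_or_ne a.1 e''.1 with heq' | hne1
            · exact absurd (prod_eq heq' ha2) hae''
            · omega
          have haeq : ((a.1, e''.2) : ℕ × ℕ) = a := by rw [← ha2]
          have heeq : ((e''.1, e''.2) : ℕ × ℕ) = e'' := rfl
          obtain ⟨j, hj1, hj2, hjq, hjq'⟩ := exists_transition
            (Q := fun i => ¬ k < f (i, e''.2)) (j0 := a.1) (j1 := e''.1)
            (by show ¬ k < f (a.1, e''.2); rw [haeq]; omega)
            (by show ¬ ¬ k < f (e''.1, e''.2); rw [heeq]; omega) (le_of_lt ha1)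
          rw [not_not] at hjq
          have hymem : ((j, e''.2) : ℕ × ℕ) ∈ cells := by
            rw [← ha2]; exact hg.colcx a ha e'' he'' ha2 j (by omega) hj2
          have hy1mem : ((j - 1, e''.2) : ℕ × ℕ) ∈ cells := by
            rw [← ha2]; exact hg.colcx a ha e'' he'' ha2 (j - 1) (by omega) (by omega)
          have hbas : f (j - 1, e''.2) ≤ f e := hsmax _ hy1mem _ hymem
            (Or.inl (prod_eq (by simp <;> omega) (by simp))) (by omega) hjq
          have h6 : f (j - 1, e''.2) ≠ f e := fun hcon =>
            absurd (congrArg Prod.snd (hC.1.inj hy1mem he hcon)) (by simp <;> omega)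
          have h7 : f a ≤ f (j - 1, e''.2) := by
            rcases eq_or_ne a.1 (j - 1) with heq' | hne1
            · rw [show a = ((j - 1, e''.2) : ℕ × ℕ) from prod_eq (by simpa using heq')
                (by simpa using ha2)]
            · exact le_of_lt (hC.small_lt ha hy1mem hfa.2 (by omega) (by simp <;> omega)
                (by simp <;> omega) (ne_of_fst (by simp <;> omega)))
          omega
    · rw [hgo a hae hae''] at hfa ⊢
      rw [hgo b hbe hbe''] at hfb ⊢
      exact hC.small_lt ha hb hfa.2 hfb.2 h1 h2 hne'
  -- ============ I2 ============
  have hI2 : RestrictedStd cells g (Finset.Icc (k + 1) n) := by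
    intro a ha b hb hfa hfb h1 h2 hne'
    rw [Finset.mem_Icc] at hfa hfb
    rcases eq_or_ne a e'' with hqa | hae''
    · obtain rfl := hqa.symm
      rw [hge''] at hfa; omega
    rcases eq_or_ne b e'' with hqb | hbe''
    · obtain rfl := hqb.symm
      rw [hge''] at hfb; omega
    rcases eq_or_ne a e with hqa | hae
    · obtain rfl := hqa.symm
      rcases eq_or_ne b e with hqb | hbe
      · obtain rfl := hqb.symm
        exact absurd rfl hne'
      rw [hge] at hfa ⊢
      rw [hgo b hbe hbe''] at hfb ⊢
      by_cases hbp : e''.1 ≤ b.1 ∧ e''.2 ≤ b.2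
      · exact hC.big_lt he'' hb hUbig (by omega) hbp.1 hbp.2 (Ne.symm hbe'')
      · rcases headj with hdown | hright
        · -- e'' = (e.1+1, e.2); b in row e.1, strictly right of e
          have hefst : e''.1 = e.1 + 1 := by rw [hdown]
          have hesnd : e''.2 = e.2 := by rw [hdown]
          have hb1 : b.1 = e.1 := by
            have hnb : ¬ (e''.1 ≤ b.1) := fun hh => hbp ⟨hh, by omega⟩
            omega
          have hb2 : e.2 < b.2 := by
            rcases eq_or_ne b.2 e.2 with heq' | hne2
            · exact absurd (prod_eq hb1 heq') hbe
            · omega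
          have hbeq : ((e.1, b.2) : ℕ × ℕ) = b := by rw [← hb1]
          have heeq : ((e.1, e.2) : ℕ × ℕ) = e := rfl
          obtain ⟨j, hj1, hj2, hjq, hjq'⟩ := exists_transition
            (Q := fun j => ¬ k < f (e.1, j)) (j0 := e.2) (j1 := b.2)
            (by show ¬ k < f (e.1, e.2); rw [heeq]; omega)
            (by show ¬ ¬ k < f (e.1, b.2); rw [hbeq]; omega) (le_of_lt hb2)
          rw [not_not] at hjq
          have hymem : ((e.1, j) : ℕ × ℕ) ∈ cells :=
            hg.rowcx e he b hb hb1.symm j (by omega) hj2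
          have hy1mem : ((e.1, j - 1) : ℕ × ℕ) ∈ cells :=
            hg.rowcx e he b hb hb1.symm (j - 1) (by omega) (by omega)
          rcases eq_or_ne (j - 1) e.2 with hje | hje
          · -- the transition is right at e : use hUmin
            have hXadj : Adjc e (e.1, j) := Or.inr (prod_eq (by simp) (by simp <;> omega))
            have hXmin : f e'' ≤ f (e.1, j) := hUmin _ hymem hXadj hjq
            have hXne : f e'' ≠ f (e.1, j) := fun hcon =>
              absurd (congrArg Prod.fst (hC.1.inj he'' hymem hcon)) (by simp <;> omega)
            have hXb : f (e.1, j) ≤ f b := by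
              rcases eq_or_ne j b.2 with heq' | hne2
              · rw [show ((e.1, j) : ℕ × ℕ) = b from prod_eq (by simpa using hb1.symm)
                  (by simpa using heq')]
              · exact le_of_lt (hC.big_lt hymem hb hjq (by omega) (by simp <;> omega)
                  (by simp <;> omega) (ne_of_snd (by simp <;> omega)))
            omega
          · -- impossible: y would be a big-adjacent small strictly right of e
            exfalso
            have hbas : f (e.1, j - 1) ≤ f e := hsmax _ hy1mem _ hymem
              (Or.inr (prod_eq (by simp) (by simp <;> omega))) (by omega) hjq
            have hylt : f e < f (e.1, j - 1) := hC.small_lt he hy1mem h01 (by omega)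
              (by simp) (by simp <;> omega) (ne_of_snd (by simp <;> omega))
            omega
        · -- e'' = (e.1, e.2+1); b in column e.2, strictly below e
          have hefst : e''.1 = e.1 := by rw [hright]
          have hesnd : e''.2 = e.2 + 1 := by rw [hright]
          have hb2 : b.2 = e.2 := by
            have hnb : ¬ (e''.2 ≤ b.2) := fun hh => hbp ⟨by omega, hh⟩
            omega
          have hb1 : e.1 < b.1 := by
            rcases eq_or_ne b.1 e.1 with heq' | hne1
            · exact absurd (prod_eq heq' hb2) hbe
            · omega
          have hbeq : ((b.1, e.2) : ℕ × ℕ) = b := by rw [← hb2]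
          have heeq : ((e.1, e.2) : ℕ × ℕ) = e := rfl
          obtain ⟨j, hj1, hj2, hjq, hjq'⟩ := exists_transition
            (Q := fun i => ¬ k < f (i, e.2)) (j0 := e.1) (j1 := b.1)
            (by show ¬ k < f (e.1, e.2); rw [heeq]; omega)
            (by show ¬ ¬ k < f (b.1, e.2); rw [hbeq]; omega) (le_of_lt hb1)
          rw [not_not] at hjq
          have hymem : ((j, e.2) : ℕ × ℕ) ∈ cells :=
            hg.colcx e he b hb hb2.symm j (by omega) hj2
          have hy1mem : ((j - 1, e.2) : ℕ × ℕ) ∈ cells :=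
            hg.colcx e he b hb hb2.symm (j - 1) (by omega) (by omega)
          rcases eq_or_ne (j - 1) e.1 with hje | hje
          · have hXadj : Adjc e (j, e.2) := Or.inl (prod_eq (by simp <;> omega) (by simp))
            have hXmin : f e'' ≤ f (j, e.2) := hUmin _ hymem hXadj hjq
            have hXne : f e'' ≠ f (j, e.2) := fun hcon =>
              absurd (congrArg Prod.snd (hC.1.inj he'' hymem hcon)) (by simp <;> omega)
            have hXb : f (j, e.2) ≤ f b := by
              rcases eq_or_ne j b.1 with heq' | hne2
              · rw [show ((j, e.2) : ℕ × ℕ) = b from prod_eq (by simpa using heq')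
                  (by simpa using hb2.symm)]
              · exact le_of_lt (hC.big_lt hymem hb hjq (by omega) (by simp <;> omega)
                  (by simp <;> omega) (ne_of_fst (by simp <;> omega)))
            omega
          · exfalso
            have hbas : f (j - 1, e.2) ≤ f e := hsmax _ hy1mem _ hymem
              (Or.inl (prod_eq (by simp <;> omega) (by simp))) (by omega) hjq
            have hylt : f e < f (j - 1, e.2) := hC.small_lt he hy1mem h01 (by omega)
              (by simp <;> omega) (by simp) (ne_of_fst (by simp <;> omega))
            omega
    rcases eq_or_ne b e with hqb | hbe
    · obtain rfl := hqb.symm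
      rw [hge] at hfb ⊢
      rw [hgo a hae hae''] at hfa ⊢
      exact hC.big_lt ha he'' (by omega) hUbig (le_trans h1 headj.le1)
        (le_trans h2 headj.le2) hae''
    · rw [hgo a hae hae''] at hfa ⊢
      rw [hgo b hbe hbe''] at hfb ⊢
      exact hC.big_lt ha hb (by omega) (by omega) h1 h2 hne'
  -- ============ alpha' ============
  have halpha : ∀ a ∈ cells, ∀ d ∈ cells, Adjc a d → g a ≤ k → k < g d → g a ≤ f e := by
    intro a ha d hd hadj' h1 h2
    rcases eq_or_ne a e'' with hqa | hae''
    · obtain rfl := hqa.symm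
      rw [hge'']
    rcases eq_or_ne a e with hqa | hae
    · obtain rfl := hqa.symm
      rw [hge] at h1; omega
    rw [hgo a hae hae''] at h1 ⊢
    rcases eq_or_ne d e with hqd | hde
    · obtain rfl := hqd.symm
      exact le_of_lt (hC.small_lt ha he h1 h01 hadj'.le1 hadj'.le2 hadj'.ne)
    rcases eq_or_ne d e'' with hqd | hde''
    · obtain rfl := hqd.symm
      rw [hge''] at h2; omega
    · rw [hgo d hde hde''] at h2
      exact hsmax a ha d hd hadj' h1 h2
  -- ============ beta' ============
  have hbeta : ∀ t, IsShort cells g t → f e ≤ t := by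
    rintro t ⟨w, hw, hfw, hcase⟩
    rcases eq_or_ne w e with hqw | hwe
    · obtain rfl := hqw.symm
      rw [← hfw, hge]; omega
    rcases eq_or_ne w e'' with hqw | hwe''
    · obtain rfl := hqw.symm
      rw [← hfw, hge'']
    rw [hgo w hwe hwe''] at hfw
    rcases hcase with ⟨hw1, hupmem, hlt'⟩ | ⟨hw1, hleftmem, hlt'⟩
    · rcases eq_or_ne ((w.1 - 1, w.2) : ℕ × ℕ) e with hup | hupne
      · rw [hup, hge] at hlt'
        have hadjew : Adjc e w := Or.inl (prod_eq (by
            have := congrArg Prod.fst hup; simp at this; omega)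
          (by have := congrArg Prod.snd hup; simp at this; omega))
        rcases le_or_gt t k with ht | ht
        · have := hC.small_lt he hw h01 (hfw ▸ ht) hadjew.le1 hadjew.le2 hadjew.ne
          omega
        · omega
      rcases eq_or_ne ((w.1 - 1, w.2) : ℕ × ℕ) e'' with hup' | hupne'
      · rw [hup', hge''] at hlt'
        have hshort' : IsShort cells f t :=
          ⟨w, hw, hfw, Or.inl ⟨hw1, hupmem, by rw [hup']; omega⟩⟩
        exact hC.bas_le he he'' headj h01 hUbig hshort'
      · rw [hgo _ hupne hupne'] at hlt'
        exact hC.bas_le he he'' headj h01 hUbig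
          ⟨w, hw, hfw, Or.inl ⟨hw1, hupmem, by omega⟩⟩
    · rcases eq_or_ne ((w.1, w.2 - 1) : ℕ × ℕ) e with hup | hupne
      · rw [hup, hge] at hlt'
        have hadjew : Adjc e w := Or.inr (prod_eq (by
            have := congrArg Prod.fst hup; simp at this; omega)
          (by have := congrArg Prod.snd hup; simp at this; omega))
        rcases le_or_gt t k with ht | ht
        · have := hC.small_lt he hw h01 (hfw ▸ ht) hadjew.le1 hadjew.le2 hadjew.ne
          omega
        · omega
      rcases eq_or_ne ((w.1, w.2 - 1) : ℕ × ℕ) e'' with hup' | hupne'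
      · rw [hup', hge''] at hlt'
        have hshort' : IsShort cells f t :=
          ⟨w, hw, hfw, Or.inr ⟨hw1, hleftmem, by rw [hup']; omega⟩⟩
        exact hC.bas_le he he'' headj h01 hUbig hshort'
      · rw [hgo _ hupne hupne'] at hlt'
        exact hC.bas_le he he'' headj h01 hUbig
          ⟨w, hw, hfw, Or.inr ⟨hw1, hleftmem, by omega⟩⟩
  have hCg : InvC n k cells g :=
    ⟨hgf, hI1, hI2, fun a ha d hd hadj' h1 h2 t ht =>
      le_trans (halpha a ha d hd hadj' h1 h2) (hbeta t ht)⟩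
  -- ============ the jdt step undoes the ijdt step ============
  have hshort_s : IsShort cells g (f e) := by
    rcases headj with hdown | hright
    · refine ⟨e'', he'', hge'', Or.inl ⟨by rw [hdown]; simp, ?_, ?_⟩⟩
      · rw [show ((e''.1 - 1, e''.2) : ℕ × ℕ) = e from prod_eq
          (by rw [hdown]; simp) (by rw [hdown])]
        exact he
      · rw [show ((e''.1 - 1, e''.2) : ℕ × ℕ) = e from prod_eq
          (by rw [hdown]; simp) (by rw [hdown]), hge]
        omega
    · refine ⟨e'', he'', hge'', Or.inr ⟨by rw [hright]; simp, ?_, ?_⟩⟩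
      · rw [show ((e''.1, e''.2 - 1) : ℕ × ℕ) = e from prod_eq
          (by rw [hright]) (by rw [hright]; simp)]
        exact he
      · rw [show ((e''.1, e''.2 - 1) : ℕ × ℕ) = e from prod_eq
          (by rw [hright]) (by rw [hright]; simp), hge]
        omega
  have hne_s : (shorts n cells g).Nonempty := ⟨f e, (mem_shorts_iff hgf).2 hshort_s⟩
  have hminval : (shorts n cells g).min' hne_s = f e := by
    apply le_antisymm
    · exact Finset.min'_le _ _ ((mem_shorts_iff hgf).2 hshort_s)
    · exact Finset.le_min' _ _ _ fun t ht => hbeta t ((mem_shorts_iff hgf).1 ht)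
  obtain ⟨p, p', hp, hp', hpadj, hpval, hplt, hpub, hpeq⟩ := step_spec hgf hne_s
  obtain rfl := (hgf.inj hp he'' (by rw [hpval, hminval, ← hge''])).symm
  have hpe : p' = e := by
    by_contra hcon
    have hp'ne'' : p' ≠ e'' := Adjc.ne hpadj
    have hgp' : g p' = f p' := hgo p' hcon hp'ne''
    have hubp := hpub e he headj
    rw [hge, hgp'] at hubp
    rcases le_or_gt (f p') k with hsm | hbg
    · omega
    · have := hC.big_lt hp' he'' hbg hUbig hpadj.le1 hpadj.le2 hp'ne''
      omega
  obtain rfl := hpe.symm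
  refine ⟨hCg, ?_, not_std_of_short hshort_s⟩
  rw [hpeq, hgeq, Equiv.swap_comm e'' e]
  exact comp_swap_invol

end Aux5


section Aux6

open Finset

variable {n k : ℕ} {cells : Finset (ℕ × ℕ)} {f T P : ℕ × ℕ → ℕ}

lemma invC_step (hg : GridS cells) (hn : 1 ≤ n) (hk1 : 1 ≤ k) (hkn : k ≤ n)
    (hC : InvC n k cells f) : InvC n k cells (stepFun n cells f) := by
  by_cases hne : (shorts n cells f).Nonempty
  · exact (fwd_micro hg hn hk1 hkn hC hne).1
  · rw [step_eq_of_empty hne]; exact hC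

lemma invC_iter (hg : GridS cells) (hn : 1 ≤ n) (hk1 : 1 ≤ k) (hkn : k ≤ n)
    (hC : InvC n k cells f) (m : ℕ) : InvC n k cells ((stepFun n cells)^[m] f) := by
  induction m with
  | zero => exact hC
  | succ m ih => rw [Function.iterate_succ_apply']; exact invC_step hg hn hk1 hkn ih

lemma replay_eq (hg : GridS cells) (hn : 1 ≤ n) (hk1 : 1 ≤ k) (hkn : k ≤ n) (m : ℕ) :
    ∀ f, InvC n k cells f → (∀ j < m, ¬ IsStandardF cells ((stepFun n cells)^[j] f)) →
    ∀ j ≤ m, (istepFun n cells)^[j]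
        (mapEntries cells (rotval n (n - k)) ((stepFun n cells)^[m] f))
      = mapEntries cells (rotval n (n - k)) ((stepFun n cells)^[m - j] f) := by
  induction m with
  | zero =>
    intro f hC hmin j hj
    rw [Nat.le_zero.1 hj]
    simp
  | succ m ih =>
    intro f hC hmin j hj
    have hne : (shorts n cells f).Nonempty :=
      shorts_nonempty_of_not_std hg hC.1 (by simpa using hmin 0 (by omega))
    have hfwd := fwd_micro hg hn hk1 hkn hC hne
    have hmin' : ∀ j < m, ¬ IsStandardF cells ((stepFun n cells)^[j] (stepFun n cells f)) := by
      intro j hjm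
      have := hmin (j + 1) (by omega)
      rwa [Function.iterate_succ_apply] at this
    rcases eq_or_lt_of_le hj with rfl | hjlt
    · have e1 : (stepFun n cells)^[m + 1] f = (stepFun n cells)^[m] (stepFun n cells f) :=
        Function.iterate_succ_apply _ _ _
      have e2 : (istepFun n cells)^[m + 1]
          (mapEntries cells (rotval n (n - k)) ((stepFun n cells)^[m] (stepFun n cells f)))
          = istepFun n cells ((istepFun n cells)^[m]
            (mapEntries cells (rotval n (n - k)) ((stepFun n cells)^[m] (stepFun n cells f)))) :=
        Function.iterate_succ_apply' _ _ _
      rw [e1, e2, ih (stepFun n cells f) hfwd.1 hmin' m le_rfl]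
      simp only [Nat.sub_self, Function.iterate_zero_apply]
      rw [hfwd.2.1]
    · have hjm : j ≤ m := by omega
      rw [Function.iterate_succ_apply, ih (stepFun n cells f) hfwd.1 hmin' j hjm,
        show m + 1 - j = (m - j) + 1 by omega, Function.iterate_succ_apply]

lemma nonstd_rel_iter (hg : GridS cells) (hn : 1 ≤ n) (hk1 : 1 ≤ k) (hkn : k ≤ n)
    {m : ℕ} (hC : InvC n k cells f)
    (hmin : ∀ j < m, ¬ IsStandardF cells ((stepFun n cells)^[j] f)) :
    ∀ l, 1 ≤ l → l ≤ m →
      ¬ IsStandardF cells (mapEntries cells (rotval n (n - k)) ((stepFun n cells)^[l] f)) := by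
  intro l h1 h2
  have hC' := invC_iter hg hn hk1 hkn hC (l - 1)
  have hne : (shorts n cells ((stepFun n cells)^[l - 1] f)).Nonempty :=
    shorts_nonempty_of_not_std hg hC'.1 (hmin (l - 1) (by omega))
  have hx := (fwd_micro hg hn hk1 hkn hC' hne).2.2
  have e1 : (stepFun n cells)^[l] f = stepFun n cells ((stepFun n cells)^[l - 1] f) := by
    conv_lhs => rw [show l = (l - 1) + 1 by omega]
    exact Function.iterate_succ_apply' _ _ _
  rw [e1]
  exact hx

lemma invC_of_rot (hg : GridS cells) (hn : 1 ≤ n) (hk1 : 1 ≤ k) (hkn : k ≤ n)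
    (hT : IsFillingF n cells T) (hstd : IsStandardF cells T) :
    InvC n k cells (mapEntries cells (rotval n k) T) := by
  have hres := std_restricted hg hT hstd (Finset.Icc 1 n)
  have hff : IsFillingF n cells (mapEntries cells (rotval n k) T) :=
    hT.mapEntries_bij (rotval_bijOn hn hkn)
  have hval : ∀ c ∈ cells, mapEntries cells (rotval n k) T c = rotval n k (T c) :=
    fun c hc => mapEntries_mem hc
  have hcases : ∀ c ∈ cells,
      (T c ≤ n - k ∧ mapEntries cells (rotval n k) T c = T c + k) ∨
      (n - k < T c ∧ mapEntries cells (rotval n k) T c = T c - (n - k)) := by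
    intro c hc
    rcases le_or_gt (T c) (n - k) with h | h
    · exact Or.inl ⟨h, by rw [hval c hc, rotval_fwd_small hkn (hT.lb hc) h]⟩
    · exact Or.inr ⟨h, by rw [hval c hc, rotval_fwd_big hkn h (hT.ub hc)]⟩
  refine ⟨hff, ?_, ?_, ?_⟩
  · intro a ha b hb hfa hfb h1 h2 hne
    rw [Finset.mem_Icc] at hfa hfb
    have hla := hT.lb ha
    have hua := hT.ub ha
    have hlb := hT.lb hb
    have hub := hT.ub hb
    have hTlt : T a < T b := hres a ha b hb (Finset.mem_Icc.2 ⟨hla, hua⟩)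
      (Finset.mem_Icc.2 ⟨hlb, hub⟩) h1 h2 hne
    rcases hcases a ha with ⟨ha1, ha2⟩ | ⟨ha1, ha2⟩ <;>
      rcases hcases b hb with ⟨hb1, hb2⟩ | ⟨hb1, hb2⟩ <;>
        rw [ha2] at hfa ⊢ <;> rw [hb2] at hfb ⊢ <;> omega
  · intro a ha b hb hfa hfb h1 h2 hne
    rw [Finset.mem_Icc] at hfa hfb
    have hla := hT.lb ha
    have hua := hT.ub ha
    have hlb := hT.lb hb
    have hub := hT.ub hb
    have hTlt : T a < T b := hres a ha b hb (Finset.mem_Icc.2 ⟨hla, hua⟩)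
      (Finset.mem_Icc.2 ⟨hlb, hub⟩) h1 h2 hne
    rcases hcases a ha with ⟨ha1, ha2⟩ | ⟨ha1, ha2⟩ <;>
      rcases hcases b hb with ⟨hb1, hb2⟩ | ⟨hb1, hb2⟩ <;>
        rw [ha2] at hfa ⊢ <;> rw [hb2] at hfb ⊢ <;> omega
  · intro a ha d hd hadj h1 h2 t ht
    exfalso
    have hla := hT.lb ha
    have hua := hT.ub ha
    have hld := hT.lb hd
    have hud := hT.ub hd
    have hTlt : T a < T d := hres a ha d hd (Finset.mem_Icc.2 ⟨hla, hua⟩)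
      (Finset.mem_Icc.2 ⟨hld, hud⟩) hadj.le1 hadj.le2 hadj.ne
    rcases hcases a ha with ⟨ha1, ha2⟩ | ⟨ha1, ha2⟩ <;>
      rcases hcases d hd with ⟨hd1, hd2⟩ | ⟨hd1, hd2⟩ <;>
        rw [ha2] at h1 <;> rw [hd2] at h2 <;> omega

/-- CRUX 1: `ijdt ∘ (-k) ∘ jdt ∘ (+k) = id` on standard fillings. -/
theorem crux1 (hg : GridS cells) (hn : 1 ≤ n) (hk1 : 1 ≤ k) (hkn : k ≤ n)
    (hT : IsFillingF n cells T) (hstd : IsStandardF cells T) :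
    IsFillingF n cells (jdtFun n cells (mapEntries cells (rotval n k) T)) ∧
    IsStandardF cells (jdtFun n cells (mapEntries cells (rotval n k) T)) ∧
    ijdtFun n cells (mapEntries cells (rotval n (n - k))
      (jdtFun n cells (mapEntries cells (rotval n k) T))) = T := by
  have hff : IsFillingF n cells (mapEntries cells (rotval n k) T) :=
    hT.mapEntries_bij (rotval_bijOn hn hkn)
  have hCf : InvC n k cells (mapEntries cells (rotval n k) T) :=
    invC_of_rot hg hn hk1 hkn hT hstd
  obtain ⟨N, hjdt, hstdN, hminN⟩ := jdtFun_run hg hff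
  rw [hjdt]
  have hPfill : IsFillingF n cells ((stepFun n cells)^[N] (mapEntries cells (rotval n k) T)) :=
    iterate_step_filling hff N
  have hrep := replay_eq hg hn hk1 hkn N (mapEntries cells (rotval n k) T) hCf hminN
  have hNN := hrep N le_rfl
  simp only [Nat.sub_self, Function.iterate_zero_apply] at hNN
  rw [rel_unrel hn hkn hT] at hNN
  have hstdj : ∀ j < N, ¬ IsStandardF cells ((istepFun n cells)^[j]
      (mapEntries cells (rotval n (n - k))
        ((stepFun n cells)^[N] (mapEntries cells (rotval n k) T)))) := by
    intro j hj
    rw [hrep j (le_of_lt hj)]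
    exact nonstd_rel_iter hg hn hk1 hkn hCf hminN (N - j) (by omega) (by omega)
  have hspec := ijdtFun_spec hg (rel_filling hn hkn hPfill) (by rw [hNN]; exact hstd) hstdj
  exact ⟨hPfill, hstdN, by rw [hspec, hNN]⟩

lemma replay2 (hg : GridS cells) (hn : 1 ≤ n) (hk1 : 1 ≤ k) (hkn : k ≤ n) (m : ℕ) :
    ∀ f, InvC n k cells f →
    (∀ j < m, ¬ IsStandardF cells ((istepFun n cells)^[j]
      (mapEntries cells (rotval n (n - k)) f))) →
    InvC n k cells (mapEntries cells (rotval n k)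
        ((istepFun n cells)^[m] (mapEntries cells (rotval n (n - k)) f))) ∧
    (∀ j ≤ m, (stepFun n cells)^[j] (mapEntries cells (rotval n k)
        ((istepFun n cells)^[m] (mapEntries cells (rotval n (n - k)) f)))
      = mapEntries cells (rotval n k)
        ((istepFun n cells)^[m - j] (mapEntries cells (rotval n (n - k)) f))) ∧
    (1 ≤ m → ¬ IsStandardF cells (mapEntries cells (rotval n k)
        ((istepFun n cells)^[m] (mapEntries cells (rotval n (n - k)) f)))) := by
  induction m with
  | zero =>
    intro f hC hmin
    refine ⟨?_, ?_, by omega⟩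
    · simp only [Function.iterate_zero_apply]
      rw [unrel_rel hn hkn hC.1]
      exact hC
    · intro j hj
      rw [Nat.le_zero.1 hj]
      simp
  | succ m ih =>
    intro f hC hmin
    -- one bwd step from f
    have htne : (talls n cells (mapEntries cells (rotval n (n - k)) f)).Nonempty :=
      talls_nonempty_of_not_std hg (rel_filling hn hkn hC.1) (by simpa using hmin 0 (by omega))
    have hbwd := bwd_micro hg hn hk1 hkn hC htne
    set f1 := mapEntries cells (rotval n k) (istepFun n cells
      (mapEntries cells (rotval n (n - k)) f)) with hf1def
    have hrel1 : mapEntries cells (rotval n (n - k)) f1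
        = istepFun n cells (mapEntries cells (rotval n (n - k)) f) := by
      rw [hf1def]
      exact rel_unrel hn hkn (istep_filling (rel_filling hn hkn hC.1))
    have hiter : ∀ j : ℕ, (istepFun n cells)^[j + 1] (mapEntries cells (rotval n (n - k)) f)
        = (istepFun n cells)^[j] (mapEntries cells (rotval n (n - k)) f1) := by
      intro j
      rw [Function.iterate_succ_apply, hrel1]
    have hmin1 : ∀ j < m, ¬ IsStandardF cells ((istepFun n cells)^[j]
        (mapEntries cells (rotval n (n - k)) f1)) := by
      intro j hj
      rw [← hiter j]
      exact hmin (j + 1) (by omega)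
    obtain ⟨ih1, ih2, ih3⟩ := ih f1 hbwd.1 hmin1
    refine ⟨?_, ?_, ?_⟩
    · rw [hiter m] at *
      exact ih1
    · intro j hj
      rw [hiter m]
      rcases eq_or_lt_of_le hj with rfl | hjlt
      · -- j = m+1 : walk m steps to f1, then one more to f
        have h1 := ih2 m le_rfl
        simp only [Nat.sub_self, Function.iterate_zero_apply] at h1
        rw [show m + 1 = 1 + m by omega, Function.iterate_add_apply, h1,
          Function.iterate_one, unrel_rel hn hkn hbwd.1.1, hbwd.2.1,
          show 1 + m - (1 + m) = 0 by omega]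
        simp only [Function.iterate_zero_apply]
        rw [unrel_rel hn hkn hC.1]
      · have hjm : j ≤ m := by omega
        rw [ih2 j hjm, show m + 1 - j = (m - j) + 1 by omega, hiter (m - j)]
    · intro _
      rcases Nat.eq_zero_or_pos m with rfl | hm
      · simpa using hbwd.2.2
      · rw [hiter m]
        exact ih3 hm

/-- CRUX 2: every standard filling is `jdt` of a rotation of a standard filling,
obtained by `ijdt`. -/
theorem crux2 (hg : GridS cells) (hn : 1 ≤ n) (hk1 : 1 ≤ k) (hkn : k ≤ n)
    (hP : IsFillingF n cells P) (hstd : IsStandardF cells P) :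
    IsFillingF n cells (ijdtFun n cells (mapEntries cells (rotval n (n - k)) P)) ∧
    IsStandardF cells (ijdtFun n cells (mapEntries cells (rotval n (n - k)) P)) ∧
    jdtFun n cells (mapEntries cells (rotval n k)
      (ijdtFun n cells (mapEntries cells (rotval n (n - k)) P))) = P := by
  have hCf : InvC n k cells P := InvC.of_std hg hP hstd
  have hrelf : IsFillingF n cells (mapEntries cells (rotval n (n - k)) P) :=
    rel_filling hn hkn hP
  obtain ⟨M, hijdt, hstdM, hminM⟩ := ijdtFun_run hg hrelf
  rw [hijdt]
  have hTfill : IsFillingF n cells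
      ((istepFun n cells)^[M] (mapEntries cells (rotval n (n - k)) P)) :=
    iterate_istep_filling hrelf M
  obtain ⟨hrep1, hrep2, hrep3⟩ := replay2 hg hn hk1 hkn M P hCf hminM
  have hNN := hrep2 M le_rfl
  simp only [Nat.sub_self, Function.iterate_zero_apply] at hNN
  rw [unrel_rel hn hkn hP] at hNN
  have hstdj : ∀ j < M, ¬ IsStandardF cells ((stepFun n cells)^[j]
      (mapEntries cells (rotval n k)
        ((istepFun n cells)^[M] (mapEntries cells (rotval n (n - k)) P)))) := by
    intro j hj
    rw [hrep2 j (le_of_lt hj)]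
    obtain ⟨_, _, h3⟩ := replay2 hg hn hk1 hkn (M - j) P hCf
      (fun l hl => hminM l (by omega))
    exact h3 (by omega)
  have hTstd : IsStandardF cells
      ((istepFun n cells)^[M] (mapEntries cells (rotval n (n - k)) P)) := hstdM
  have hspec := jdtFun_spec hg (hTfill.mapEntries_bij (rotval_bijOn hn hkn))
    (by rw [hNN]; exact hstd) hstdj
  exact ⟨hTfill, hTstd, by rw [hspec, hNN]⟩

/-- Isolated cells (like the box) are never moved. -/
lemma step_isolated (hf : IsFillingF n cells f) {b0 : ℕ × ℕ}
    (hiso : ∀ x ∈ cells, ¬ Adjc x b0 ∧ ¬ Adjc b0 x) :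
    stepFun n cells f b0 = f b0 := by
  by_cases hne : (shorts n cells f).Nonempty
  · obtain ⟨c, c', hc, hc', hadj, _, _, _, heq⟩ := step_spec hf hne
    rw [heq]
    refine comp_swap_other ?_ ?_
    · rintro rfl
      exact (hiso c' hc').1 hadj
    · rintro rfl
      exact (hiso c hc).2 hadj
  · rw [step_eq_of_empty hne]

lemma istep_isolated (hf : IsFillingF n cells f) {b0 : ℕ × ℕ}
    (hiso : ∀ x ∈ cells, ¬ Adjc x b0 ∧ ¬ Adjc b0 x) :
    istepFun n cells f b0 = f b0 := by
  by_cases hne : (talls n cells f).Nonempty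
  · obtain ⟨c, c'', hc, hc'', hadj, _, _, _, heq⟩ := istep_spec hf hne
    rw [heq]
    refine comp_swap_other ?_ ?_
    · rintro rfl
      exact (hiso c'' hc'').2 hadj
    · rintro rfl
      exact (hiso c hc).1 hadj
  · rw [istep_eq_of_empty hne]

lemma jdtFun_isolated (hg : GridS cells) (hf : IsFillingF n cells f) {b0 : ℕ × ℕ}
    (hiso : ∀ x ∈ cells, ¬ Adjc x b0 ∧ ¬ Adjc b0 x) :
    jdtFun n cells f b0 = f b0 := by
  obtain ⟨N, hjdt, hx1, hx2⟩ := jdtFun_run hg hf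
  rw [hjdt]
  clear hjdt hx1 hx2
  induction N with
  | zero => simp
  | succ N ih =>
    rw [Function.iterate_succ_apply', step_isolated (iterate_step_filling hf N) hiso]
    exact ih

lemma ijdtFun_isolated (hg : GridS cells) (hf : IsFillingF n cells f) {b0 : ℕ × ℕ}
    (hiso : ∀ x ∈ cells, ¬ Adjc x b0 ∧ ¬ Adjc b0 x) :
    ijdtFun n cells f b0 = f b0 := by
  obtain ⟨N, hijdt, hx1, hx2⟩ := ijdtFun_run hg hf
  rw [hijdt]
  clear hijdt hx1 hx2
  induction N with
  | zero => simp
  | succ N ih =>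
    rw [Function.iterate_succ_apply', istep_isolated (iterate_istep_filling hf N) hiso]
    exact ih

end Aux6


section Aux7

open Finset

variable {lam : YoungDiagram}

lemma mem_boxShape {c : ℕ × ℕ} :
    c ∈ boxShape lam ↔ c = boxCell lam ∨ (1 ≤ c.1 ∧ (c.1 - 1, c.2) ∈ lam.cells) := by
  rw [boxShape, Finset.mem_insert, Finset.mem_image]
  constructor
  · rintro (h | ⟨p, hp, rfl⟩)
    · exact Or.inl h
    · refine Or.inr ⟨by simp, ?_⟩
      simpa using hp
  · rintro (rfl | ⟨h1, h2⟩)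
    · exact Or.inl rfl
    · exact Or.inr ⟨(c.1 - 1, c.2), h2, by ext <;> simp <;> omega⟩

lemma boxCell_mem : boxCell lam ∈ boxShape lam := mem_boxShape.2 (Or.inl rfl)

lemma boxShape_row0 {c : ℕ × ℕ} (hc : c ∈ boxShape lam) (h0 : c.1 = 0) : c = boxCell lam := by
  rcases mem_boxShape.1 hc with h | ⟨h1, _⟩
  · exact h
  · omega

lemma lam_mem_cells {c : ℕ × ℕ} (hc : c ∈ boxShape lam) (hne : c ≠ boxCell lam) :
    1 ≤ c.1 ∧ (c.1 - 1, c.2) ∈ lam.cells := by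
  rcases mem_boxShape.1 hc with h | h
  · exact absurd h hne
  · exact h

lemma boxShape_col_lt {c : ℕ × ℕ} (hc : c ∈ boxShape lam) (hne : c ≠ boxCell lam) :
    c.2 < lam.rowLen 0 := by
  obtain ⟨h1, h2⟩ := lam_mem_cells hc hne
  rw [YoungDiagram.mem_cells, YoungDiagram.mem_iff_lt_rowLen] at h2
  have := lam.rowLen_anti 0 (c.1 - 1) (by omega)
  omega

lemma grid_boxShape : GridS (boxShape lam) := by
  constructor
  · -- rows
    intro a ha b hb hab j hj1 hj2
    rcases eq_or_ne a (boxCell lam) with rfl | hane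
    · have hb' : b = boxCell lam := boxShape_row0 hb (by rw [← hab]; rfl)
      have : j = (boxCell lam).2 := by
        rw [hb'] at hj2
        omega
      rw [this]
      exact boxCell_mem
    · obtain ⟨h1, _⟩ := lam_mem_cells ha hane
      have hbne : b ≠ boxCell lam := by
        intro hcon
        have : b.1 = 0 := by rw [hcon]; rfl
        omega
      obtain ⟨hb1, hb2⟩ := lam_mem_cells hb hbne
      refine mem_boxShape.2 (Or.inr ⟨h1, ?_⟩)
      rw [YoungDiagram.mem_cells] at hb2 ⊢
      exact lam.up_left_mem (by omega) hj2 hb2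
  · -- columns
    intro a ha b hb hab i hi1 hi2
    rcases eq_or_ne b (boxCell lam) with rfl | hbne
    · have h0 : (boxCell lam).1 = 0 := rfl
      have ha0 : a.1 = 0 := by omega
      have ha' : a = boxCell lam := boxShape_row0 ha ha0
      have : i = 0 := by omega
      rw [this, ha']
      exact boxCell_mem
    · obtain ⟨hb1, hb2⟩ := lam_mem_cells hb hbne
      rcases Nat.eq_zero_or_pos i with rfl | hi
      · have ha0 : a.1 = 0 := by omega
        have ha' : a = boxCell lam := boxShape_row0 ha ha0
        exfalso
        have hcol : a.2 = lam.rowLen 0 := by rw [ha']; rfl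
        rw [YoungDiagram.mem_cells, YoungDiagram.mem_iff_lt_rowLen] at hb2
        have := lam.rowLen_anti 0 (b.1 - 1) (by omega)
        omega
      · refine mem_boxShape.2 (Or.inr ⟨hi, ?_⟩)
        rw [YoungDiagram.mem_cells] at hb2 ⊢
        have : ((i - 1, a.2) : ℕ × ℕ) ∈ lam := lam.up_left_mem (by omega) (by omega) hb2
        simpa using this
  · -- corner
    intro a ha b hb h1 h2
    rcases eq_or_ne b (boxCell lam) with rfl | hbne
    · have ha0 : a.1 = 0 := by
        have h0 : (boxCell lam).1 = 0 := rfl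
        omega
      have ha' : a = boxCell lam := boxShape_row0 ha ha0
      rw [show (boxCell lam).1 = 0 from rfl, ha']
      have : ((0 : ℕ), (boxCell lam).2) = boxCell lam := rfl
      rw [this]
      exact boxCell_mem
    · obtain ⟨hb1, hb2⟩ := lam_mem_cells hb hbne
      rcases eq_or_ne a (boxCell lam) with rfl | hane
      · exfalso
        have hcol : (boxCell lam).2 = lam.rowLen 0 := rfl
        rw [YoungDiagram.mem_cells, YoungDiagram.mem_iff_lt_rowLen] at hb2
        have := lam.rowLen_anti 0 (b.1 - 1) (by omega)
        omega
      · refine mem_boxShape.2 (Or.inr ⟨by omega, ?_⟩)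
        rw [YoungDiagram.mem_cells] at hb2 ⊢
        exact lam.up_left_mem le_rfl h2 hb2

lemma box_isolated : ∀ x ∈ boxShape lam, ¬ Adjc x (boxCell lam) ∧ ¬ Adjc (boxCell lam) x := by
  intro x hx
  constructor
  · rintro (h | h)
    · have : (boxCell lam).1 = 0 := rfl
      have := congrArg Prod.fst h
      simp at this
      omega
    · have hx0 : x.1 = 0 := by
        have := congrArg Prod.fst h
        have h0 : (boxCell lam).1 = 0 := rfl
        omega
      have hxb : x = boxCell lam := boxShape_row0 hx hx0
      have := congrArg Prod.snd h
      rw [hxb] at this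
      simp at this
  · rintro (h | h)
    · have hxne : x ≠ boxCell lam := by
        intro hcon
        have := congrArg Prod.fst h
        rw [hcon] at this
        have h0 : (boxCell lam).1 = 0 := rfl
        omega
      obtain ⟨h1, h2⟩ := lam_mem_cells hx hxne
      have hx1 : x.1 = 1 := by
        have := congrArg Prod.fst h
        have h0 : (boxCell lam).1 = 0 := rfl
        omega
      have hx2 : x.2 = lam.rowLen 0 := by
        have := congrArg Prod.snd h
        exact this.symm ▸ rfl
      rw [YoungDiagram.mem_cells, YoungDiagram.mem_iff_lt_rowLen] at h2
      rw [hx1] at h2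
      simp at h2
      omega
    · have hx0 : x.1 = 0 := by
        have := congrArg Prod.fst h
        have h0 : (boxCell lam).1 = 0 := rfl
        omega
      have hxb : x = boxCell lam := boxShape_row0 hx hx0
      have := congrArg Prod.snd h
      rw [hxb] at this
      simp at this

end Aux7


section Aux8

open Finset

variable {n k : ℕ} {cells : Finset (ℕ × ℕ)}

lemma mapEntries_congr {φ ψ : ℕ → ℕ} {f : ℕ × ℕ → ℕ}
    (h : ∀ c ∈ cells, φ (f c) = ψ (f c)) :
    mapEntries cells φ f = mapEntries cells ψ f := by
  funext c
  by_cases hc : c ∈ cells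
  · simp [mapEntries, hc, h c hc]
  · simp [mapEntries, hc]

lemma rotval_one {x : ℕ} : rotval n 1 x = x % n + 1 := by
  unfold rotval
  rw [show x + 1 - 1 = x by omega]

lemma rotval_n_val (hk1 : 1 ≤ k) (hkn : k ≤ n) : rotval n k n = k := by
  unfold rotval
  rw [show n + k - 1 = n + (k - 1) by omega, Nat.add_mod_left, Nat.mod_eq_of_lt (by omega)]
  omega

lemma rotval_zero (hk1 : 1 ≤ k) (hkn : k ≤ n) : rotval n 0 k = k := by
  unfold rotval
  rw [show k + 0 - 1 = k - 1 by omega, Nat.mod_eq_of_lt (by omega)]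
  omega

lemma rotval_succ_mod {e : ℕ} : rotval n (k % n + 1) e = rotval n (k + 1) e := by
  unfold rotval
  rw [show e + (k % n + 1) - 1 = e + k % n by omega,
    show e + (k + 1) - 1 = e + k by omega, Nat.add_mod_mod]

lemma rowOf_rot (hn : 1 ≤ n) {R : ℕ × ℕ → ℕ} (hf : IsFillingF n cells R) {e : ℕ}
    (h1 : 1 ≤ e) (h2 : e ≤ n) :
    rowOf cells (mapEntries cells (rotval n 1) R) e = rowOf cells R (rotval n (n - 1) e) := by
  unfold rowOf
  congr 1
  ext i
  constructor
  · rintro ⟨j, hj, hval⟩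
    refine ⟨j, hj, ?_⟩
    rw [mapEntries_mem hj] at hval
    rw [← hval]
    exact (rotval_cancel' hn hn (hf.lb hj) (hf.ub hj)).symm
  · rintro ⟨j, hj, hval⟩
    refine ⟨j, hj, ?_⟩
    rw [mapEntries_mem hj, hval]
    exact rotval_cancel hn hn h1 h2

lemma cDesRot_rot (hn : 1 ≤ n) {R : ℕ × ℕ → ℕ} (hf : IsFillingF n cells R) :
    cDesRot n cells (mapEntries cells (rotval n 1) R)
      = (cDesRot n cells R).image (rotval n 1) := by
  unfold cDesRot
  ext x
  simp only [Finset.mem_filter, Finset.mem_image, Finset.mem_Icc]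
  constructor
  · rintro ⟨⟨hx1, hx2⟩, hlt⟩
    have hmem := rotval_mem (a := n - 1) hn hx1
    refine ⟨rotval n (n - 1) x, ⟨⟨hmem.1, hmem.2⟩, ?_⟩, rotval_cancel hn hn hx1 hx2⟩
    have hrx1 : 1 ≤ rotval n 1 x := (rotval_mem hn hx1).1
    have hrx2 : rotval n 1 x ≤ n := (rotval_mem hn hx1).2
    rw [rowOf_rot hn hf hx1 hx2, rowOf_rot hn hf hrx1 hrx2,
      rotval_cancel' hn hn hx1 hx2] at hlt
    rwa [rotval_cancel hn hn hx1 hx2]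
  · rintro ⟨i, ⟨⟨hi1, hi2⟩, hlt⟩, rfl⟩
    have hri := rotval_mem (a := 1) hn hi1
    refine ⟨⟨hri.1, hri.2⟩, ?_⟩
    rw [rowOf_rot hn hf hri.1 hri.2, rowOf_rot hn hf (rotval_mem hn hri.1).1
      (rotval_mem hn hri.1).2, rotval_cancel' hn hn hi1 hi2,
      rotval_cancel' hn hn hri.1 hri.2]
    exact hlt

/-- The central lemma about the orbit map. -/
lemma key_lemma (hn : 1 ≤ n) {lam : YoungDiagram} {T : ℕ × ℕ → ℕ}
    (hT : IsFillingF n (boxShape lam) T) (hTstd : IsStandardF (boxShape lam) T)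
    (hTbox : T (boxCell lam) = n) (hk1 : 1 ≤ k) (hkn : k ≤ n) :
    IsFillingF n (boxShape lam)
      (jdtFun n (boxShape lam) (mapEntries (boxShape lam) (rotval n k) T)) ∧
    IsStandardF (boxShape lam)
      (jdtFun n (boxShape lam) (mapEntries (boxShape lam) (rotval n k) T)) ∧
    jdtInvFun n lam (jdtFun n (boxShape lam) (mapEntries (boxShape lam) (rotval n k) T))
      = mapEntries (boxShape lam) (rotval n k) T ∧
    jdtFun n (boxShape lam) (mapEntries (boxShape lam) (rotval n 1)
      (jdtInvFun n lam (jdtFun n (boxShape lam) (mapEntries (boxShape lam) (rotval n k) T))))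
      = jdtFun n (boxShape lam) (mapEntries (boxShape lam) (rotval n (k % n + 1)) T) := by
  have hg : GridS (boxShape lam) := grid_boxShape
  obtain ⟨hQf, hQstd, hinv⟩ := crux1 hg hn hk1 hkn hT hTstd
  have hdelta : deltaOf lam
      (jdtFun n (boxShape lam) (mapEntries (boxShape lam) (rotval n k) T)) = k := by
    rw [deltaOf, jdtFun_isolated hg (hT.mapEntries_bij (rotval_bijOn hn hkn)) box_isolated,
      mapEntries_mem boxCell_mem, hTbox, rotval_n_val hk1 hkn]
  have hjdtinv : jdtInvFun n lam
      (jdtFun n (boxShape lam) (mapEntries (boxShape lam) (rotval n k) T))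
      = mapEntries (boxShape lam) (rotval n k) T := by
    rw [jdtInvFun, hdelta, hinv]
  refine ⟨hQf, hQstd, hjdtinv, ?_⟩
  rw [hjdtinv, mapEntries_comp]
  have hme : mapEntries (boxShape lam) (fun x => rotval n 1 (rotval n k x)) T
      = mapEntries (boxShape lam) (rotval n (k % n + 1)) T :=
    mapEntries_congr fun c hc => by
      show rotval n 1 (rotval n k (T c)) = rotval n (k % n + 1) (T c)
      rw [rotval_add (hT.lb hc), rotval_succ_mod]
  rw [hme]

end Aux8

section Main

/-- The main assembly. -/
theorem psi_action_aux (n : ℕ) (lam : YoungDiagram) :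
    Set.BijOn
      (fun P => jdtFun n (boxShape lam)
        (mapEntries (boxShape lam) (rotval n 1) (jdtInvFun n lam P)))
      {P : ℕ × ℕ → ℕ | IsFillingF n (boxShape lam) P ∧ IsStandardF (boxShape lam) P}
      {P : ℕ × ℕ → ℕ | IsFillingF n (boxShape lam) P ∧ IsStandardF (boxShape lam) P} ∧
    (∀ P ∈ {P : ℕ × ℕ → ℕ |
        IsFillingF n (boxShape lam) P ∧ IsStandardF (boxShape lam) P},
      (fun P => jdtFun n (boxShape lam)
        (mapEntries (boxShape lam) (rotval n 1) (jdtInvFun n lam P)))^[n] P = P) ∧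
    (∀ P ∈ {P : ℕ × ℕ → ℕ |
        IsFillingF n (boxShape lam) P ∧ IsStandardF (boxShape lam) P},
      cDesBox n lam (jdtFun n (boxShape lam)
          (mapEntries (boxShape lam) (rotval n 1) (jdtInvFun n lam P))) =
        (cDesBox n lam P).image (rotval n 1)) := by
  classical
  by_cases hn : 1 ≤ n
  case neg =>
    have hS : {P : ℕ × ℕ → ℕ |
        IsFillingF n (boxShape lam) P ∧ IsStandardF (boxShape lam) P} = (∅ : Set _) := by
      ext P
      simp only [Set.mem_setOf_eq, Set.mem_empty_iff_false, iff_false, not_and]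
      intro hf _
      have h1 := hf.lb (boxCell_mem (lam := lam))
      have h2 := hf.ub (boxCell_mem (lam := lam))
      omega
    rw [hS]
    refine ⟨Set.bijOn_empty _, ?_, ?_⟩ <;> intro P hP <;> exact absurd hP (Set.notMem_empty P)
  case pos =>
  have hg : GridS (boxShape lam) := grid_boxShape
  set ψ : (ℕ × ℕ → ℕ) → (ℕ × ℕ → ℕ) := fun P => jdtFun n (boxShape lam)
    (mapEntries (boxShape lam) (rotval n 1) (jdtInvFun n lam P)) with hψ
  set S : Set (ℕ × ℕ → ℕ) := {P : ℕ × ℕ → ℕ |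
    IsFillingF n (boxShape lam) P ∧ IsStandardF (boxShape lam) P} with hSdef
  have hrepr : ∀ P ∈ S, ∃ T k, IsFillingF n (boxShape lam) T ∧
      IsStandardF (boxShape lam) T ∧ T (boxCell lam) = n ∧ 1 ≤ k ∧ k ≤ n ∧
      P = jdtFun n (boxShape lam) (mapEntries (boxShape lam) (rotval n k) T) := by
    rintro P ⟨hPf, hPstd⟩
    have hk1 : 1 ≤ P (boxCell lam) := hPf.lb boxCell_mem
    have hkn : P (boxCell lam) ≤ n := hPf.ub boxCell_mem
    obtain ⟨hTf, hTstd, hjdt⟩ := crux2 hg hn hk1 hkn hPf hPstd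
    refine ⟨_, P (boxCell lam), hTf, hTstd, ?_, hk1, hkn, hjdt.symm⟩
    rw [ijdtFun_isolated hg (rel_filling hn hkn hPf) box_isolated,
      mapEntries_mem boxCell_mem, rotval_small hkn hk1 le_rfl]
    omega
  have hpsi_eq : ∀ T, IsFillingF n (boxShape lam) T → IsStandardF (boxShape lam) T →
      T (boxCell lam) = n → ∀ k, 1 ≤ k → k ≤ n →
      ψ (jdtFun n (boxShape lam) (mapEntries (boxShape lam) (rotval n k) T))
        = jdtFun n (boxShape lam) (mapEntries (boxShape lam) (rotval n (k % n + 1)) T) := by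
    intro T hTf hTstd hTbox k hk1 hkn
    exact (key_lemma hn hTf hTstd hTbox hk1 hkn).2.2.2
  have horbit : ∀ T, IsFillingF n (boxShape lam) T → IsStandardF (boxShape lam) T →
      T (boxCell lam) = n → ∀ k, 1 ≤ k → k ≤ n → ∀ j,
      ψ^[j] (jdtFun n (boxShape lam) (mapEntries (boxShape lam) (rotval n k) T))
      = jdtFun n (boxShape lam)
          (mapEntries (boxShape lam) (rotval n (rotval n j k)) T) := by
    intro T hTf hTstd hTbox k hk1 hkn j
    induction j with
    | zero =>
      simp only [Function.iterate_zero_apply]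
      rw [rotval_zero hk1 hkn]
    | succ j ih =>
      rw [Function.iterate_succ_apply', ih]
      have hb1 : 1 ≤ rotval n j k := (rotval_mem hn hk1).1
      have hb2 : rotval n j k ≤ n := (rotval_mem hn hk1).2
      rw [hpsi_eq T hTf hTstd hTbox (rotval n j k) hb1 hb2]
      congr 2
      rw [show rotval n j k % n + 1 = rotval n 1 (rotval n j k) from rotval_one.symm,
        rotval_add hk1]
  have hmem_of : ∀ T, IsFillingF n (boxShape lam) T → IsStandardF (boxShape lam) T →
      ∀ k, 1 ≤ k → k ≤ n →
      jdtFun n (boxShape lam) (mapEntries (boxShape lam) (rotval n k) T) ∈ S := by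
    intro T hTf hTstd k hk1 hkn
    obtain ⟨h1, h2, _⟩ := crux1 hg hn hk1 hkn hTf hTstd
    exact ⟨h1, h2⟩
  have hmaps : ∀ P ∈ S, ψ P ∈ S := by
    intro P hP
    obtain ⟨T, k, hTf, hTstd, hTbox, hk1, hkn, hPeq⟩ := hrepr P hP
    rw [hPeq, hpsi_eq T hTf hTstd hTbox k hk1 hkn]
    exact hmem_of T hTf hTstd (k % n + 1) (by omega) (by
      have := Nat.mod_lt k (show 0 < n by omega)
      omega)
  have hpow : ∀ P ∈ S, ψ^[n] P = P := by
    intro P hP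
    obtain ⟨T, k, hTf, hTstd, hTbox, hk1, hkn, hPeq⟩ := hrepr P hP
    rw [hPeq, horbit T hTf hTstd hTbox k hk1 hkn n, rotval_n_eq hn hk1 hkn]
  have hiter_mem : ∀ j, ∀ P ∈ S, ψ^[j] P ∈ S := by
    intro j
    induction j with
    | zero => intro P hP; simpa using hP
    | succ j ih =>
      intro P hP
      rw [Function.iterate_succ_apply']
      exact hmaps _ (ih P hP)
  have hinj : Set.InjOn ψ S := by
    intro a ha b hb hab
    have h1 : ψ^[n] a = a := hpow a ha
    have h2 : ψ^[n] b = b := hpow b hb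
    rw [show n = (n - 1) + 1 by omega, Function.iterate_succ_apply] at h1 h2
    rw [← h1, ← h2, hab]
  have hsurj : Set.SurjOn ψ S S := by
    intro b hb
    refine ⟨ψ^[n - 1] b, hiter_mem (n - 1) b hb, ?_⟩
    have h2 : ψ^[n] b = b := hpow b hb
    rw [show n = (n - 1) + 1 by omega, Function.iterate_succ_apply'] at h2
    exact h2
  have hcdes : ∀ P ∈ S, cDesBox n lam (ψ P) = (cDesBox n lam P).image (rotval n 1) := by
    intro P hP
    obtain ⟨T, k, hTf, hTstd, hTbox, hk1, hkn, hPeq⟩ := hrepr P hP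
    have hkey := key_lemma (k := k) hn hTf hTstd hTbox hk1 hkn
    have hk'1 : 1 ≤ k % n + 1 := by omega
    have hk'n : k % n + 1 ≤ n := by
      have := Nat.mod_lt k (show 0 < n by omega)
      omega
    have hkey' := key_lemma (k := k % n + 1) hn hTf hTstd hTbox hk'1 hk'n
    have hψP : ψ P = jdtFun n (boxShape lam)
        (mapEntries (boxShape lam) (rotval n (k % n + 1)) T) := by
      rw [hPeq, hpsi_eq T hTf hTstd hTbox k hk1 hkn]
    rw [hψP]
    unfold cDesBox
    rw [hkey'.2.2.1, hPeq, hkey.2.2.1]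
    have hcomp : mapEntries (boxShape lam) (rotval n (k % n + 1)) T
        = mapEntries (boxShape lam) (rotval n 1)
            (mapEntries (boxShape lam) (rotval n k) T) := by
      rw [mapEntries_comp]
      exact mapEntries_congr fun c hc => by
        rw [rotval_succ_mod, ← rotval_add (hTf.lb hc)]
    rw [hcomp]
    exact cDesRot_rot hn (hTf.mapEntries_bij (rotval_bijOn hn hkn))
  exact ⟨⟨fun P hP => hmaps P hP, hinj, hsurj⟩, hpow, hcdes⟩

end Main


/-- Proposition 5.2(2). For every `λ ⊢ n-1`, the map
`ψ(P) = jdt(1 + jdt⁻¹(P))` is a bijection of `SYT(λ^□)` onto itself whose `n`-th iterate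
is the identity (so it generates a `ℤ_n`-action), and it rotates cyclic descent sets:
`cDes(ψ(P)) = 1 + cDes(P)` (elementwise modulo `n`). -/
theorem psi_action (n : ℕ) (lam : YoungDiagram) (hlam : lam.cells.card = n - 1) :
    Set.BijOn
      (fun P => jdtFun n (boxShape lam)
        (mapEntries (boxShape lam) (rotval n 1) (jdtInvFun n lam P)))
      {P : ℕ × ℕ → ℕ | IsFillingF n (boxShape lam) P ∧ IsStandardF (boxShape lam) P}
      {P : ℕ × ℕ → ℕ | IsFillingF n (boxShape lam) P ∧ IsStandardF (boxShape lam) P} ∧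
    (∀ P ∈ {P : ℕ × ℕ → ℕ |
        IsFillingF n (boxShape lam) P ∧ IsStandardF (boxShape lam) P},
      (fun P => jdtFun n (boxShape lam)
        (mapEntries (boxShape lam) (rotval n 1) (jdtInvFun n lam P)))^[n] P = P) ∧
    (∀ P ∈ {P : ℕ × ℕ → ℕ |
        IsFillingF n (boxShape lam) P ∧ IsStandardF (boxShape lam) P},
      cDesBox n lam (jdtFun n (boxShape lam)
          (mapEntries (boxShape lam) (rotval n 1) (jdtInvFun n lam P))) =
        (cDesBox n lam P).image (rotval n 1)) := by
  exact psi_action_aux n lam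

end SchurRot
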